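/- arXiv:1109.2020 — 8 statements merged into one kernel-verified Lean document; each statement's English description precedes it below -/
import Mathlib

section
/- Let $G$ be a group and $n$ a natural number. If the $n$-th term $Z_n(G)$ of the upper central series of $G$ has finite index in $G$, then the subgroup $\gamma_{n+1}(G)$ (the $n$-th term of Mathlib's lower central series, `lowerCentralSeries G n`, with `lowerCentralSeries G 0 = ⊤`) is finite. -/
universe u

section BaerAux

open Subgroup commutatorElement

variable {G : Type u} [Group G]

private lemma baer_commutator_mul_right_eq {x w : G} (h : Commute x w) (y : G) :
    ⁅x, y * w⁆ = ⁅x, y⁆ := by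
  have hw : x⁻¹ * w = w * x⁻¹ := h.inv_left.eq
  calc ⁅x, y * w⁆ = x * y * (w * x⁻¹) * w⁻¹ * y⁻¹ := by group
    _ = x * y * (x⁻¹ * w) * w⁻¹ * y⁻¹ := by rw [← hw]
    _ = ⁅x, y⁆ := by group

private lemma baer_commutator_mul_left_eq {z y : G} (h : Commute z y) (x : G) :
    ⁅x * z, y⁆ = ⁅x, y⁆ := by
  have hz : z * y = y * z := h.eq
  calc ⁅x * z, y⁆ = x * (z * y) * z⁻¹ * x⁻¹ * y⁻¹ := by group
    _ = x * (y * z) * z⁻¹ * x⁻¹ * y⁻¹ := by rw [hz]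
    _ = ⁅x, y⁆ := by group

/-- The key commutator estimate: `⁅γ_{i+1}(G), Z_{i+j+1}(G)⁆ ≤ Z_j(G)`. -/
private lemma baer_lcs_ucs_comm (i : ℕ) :
    ∀ j : ℕ, ∀ x ∈ Subgroup.lowerCentralSeries (⊤ : Subgroup G) i, ∀ z ∈ Subgroup.upperCentralSeries G (i + j + 1),
      ⁅x, z⁆ ∈ Subgroup.upperCentralSeries G j := by
  induction i with
  | zero =>
    intro j x _ z hz
    rw [Nat.zero_add] at hz
    have h1 : ⁅z, x⁆ ∈ Subgroup.upperCentralSeries G j :=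
      (Subgroup.mem_upperCentralSeries_succ_iff.mp hz) x
    have h2 : ⁅x, z⁆ = ⁅z, x⁆⁻¹ := (commutatorElement_inv z x).symm
    rw [h2]
    exact inv_mem h1
  | succ i ih =>
    intro j x hx
    let K : Subgroup G :=
      { carrier := {a : G | ∀ z ∈ Subgroup.upperCentralSeries G (i + 1 + j + 1),
          ⁅a, z⁆ ∈ Subgroup.upperCentralSeries G j}
        one_mem' := by
          intro z hz
          simp only [commutatorElement_one_left]
          exact one_mem _
        mul_mem' := by
          intro a b ha hb z hz
          have h1 : ⁅a * b, z⁆ = a * ⁅b, z⁆ * a⁻¹ * ⁅a, z⁆ := by group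
          rw [h1]
          exact mul_mem ((inferInstance : (Subgroup.upperCentralSeries G j).Normal).conj_mem _ (hb z hz) a) (ha z hz)
        inv_mem' := by
          intro a ha z hz
          have h1 : ⁅a⁻¹, z⁆ = a⁻¹ * ⁅a, z⁆⁻¹ * (a⁻¹)⁻¹ := by group
          rw [h1]
          exact (inferInstance : (Subgroup.upperCentralSeries G j).Normal).conj_mem _ (inv_mem (ha z hz)) a⁻¹ }
    have hle : Subgroup.lowerCentralSeries (⊤ : Subgroup G) (i + 1) ≤ K := by
      rw [Subgroup.lowerCentralSeries_succ]
      apply (closure_le K).mpr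
      rintro w ⟨a, ha, g, -, rfl⟩
      intro z hz
      -- goal : ⁅a * g * a⁻¹ * g⁻¹, z⁆ ∈ Subgroup.upperCentralSeries G j
      show ⁅⁅a, g⁆, z⁆ ∈ Subgroup.upperCentralSeries G j
      have hz' : z ∈ Subgroup.upperCentralSeries G (i + j + 1 + 1) := by
        have e : i + 1 + j + 1 = i + j + 1 + 1 := by omega
        rwa [e] at hz
      -- t1 : ⁅a⁻¹, ⁅g⁻¹, z⁆⁆ ∈ ucs j
      have t1 : ⁅a⁻¹, ⁅g⁻¹, z⁆⁆ ∈ Subgroup.upperCentralSeries G j := by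
        have h1 : ⁅z, g⁻¹⁆ ∈ Subgroup.upperCentralSeries G (i + j + 1) :=
          (Subgroup.mem_upperCentralSeries_succ_iff.mp hz') g⁻¹
        have h2 : ⁅g⁻¹, z⁆ ∈ Subgroup.upperCentralSeries G (i + j + 1) := by
          have := inv_mem h1
          rwa [commutatorElement_inv] at this
        exact ih j a⁻¹ (inv_mem ha) _ h2
      -- t2 : ⁅g, ⁅z⁻¹, a⁻¹⁆⁆ ∈ ucs j
      have t2 : ⁅g, ⁅z⁻¹, a⁻¹⁆⁆ ∈ Subgroup.upperCentralSeries G j := by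
        have hz'' : z⁻¹ ∈ Subgroup.upperCentralSeries G (i + (j + 1) + 1) := by
          have e : i + 1 + j + 1 = i + (j + 1) + 1 := by omega
          exact inv_mem (by rwa [e] at hz)
        have h3 : ⁅a⁻¹, z⁻¹⁆ ∈ Subgroup.upperCentralSeries G (j + 1) :=
          ih (j + 1) a⁻¹ (inv_mem ha) z⁻¹ hz''
        have h4 : ⁅z⁻¹, a⁻¹⁆ ∈ Subgroup.upperCentralSeries G (j + 1) := by
          have := inv_mem h3
          rwa [commutatorElement_inv] at this
        have h5 : ⁅⁅z⁻¹, a⁻¹⁆, g⁆ ∈ Subgroup.upperCentralSeries G j :=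
          (Subgroup.mem_upperCentralSeries_succ_iff.mp h4) g
        have := inv_mem h5
        rwa [commutatorElement_inv] at this
      have hw : ⁅z, ⁅a, g⁆⁆ =
          a * z * ⁅g, ⁅z⁻¹, a⁻¹⁆⁆⁻¹ * z⁻¹ * g * ⁅a⁻¹, ⁅g⁻¹, z⁆⁆⁻¹ * g⁻¹ * a⁻¹ := by
        group
      have hmem : ⁅z, ⁅a, g⁆⁆ ∈ Subgroup.upperCentralSeries G j := by
        have hE : a * z * ⁅g, ⁅z⁻¹, a⁻¹⁆⁆⁻¹ * z⁻¹ * g * ⁅a⁻¹, ⁅g⁻¹, z⁆⁆⁻¹ * g⁻¹ * a⁻¹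
            = a * ((z * ⁅g, ⁅z⁻¹, a⁻¹⁆⁆⁻¹ * z⁻¹) * (g * ⁅a⁻¹, ⁅g⁻¹, z⁆⁆⁻¹ * g⁻¹)) * a⁻¹ := by
          group
        rw [hw, hE]
        exact (inferInstance : (Subgroup.upperCentralSeries G j).Normal).conj_mem _
          (mul_mem ((inferInstance : (Subgroup.upperCentralSeries G j).Normal).conj_mem _ (inv_mem t2) z)
            ((inferInstance : (Subgroup.upperCentralSeries G j).Normal).conj_mem _ (inv_mem t1) g)) a
      have := inv_mem hmem
      rwa [commutatorElement_inv] at this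
    intro z hz
    exact hle hx z hz

private lemma baer_commute {n : ℕ} {x z : G} (hx : x ∈ Subgroup.lowerCentralSeries (⊤ : Subgroup G) n)
    (hz : z ∈ Subgroup.upperCentralSeries G (n + 1)) : Commute x z := by
  have h := baer_lcs_ucs_comm n 0 x hx z (by simpa using hz)
  rw [Subgroup.upperCentralSeries_zero, Subgroup.mem_bot] at h
  exact commutatorElement_eq_one_iff_commute.mp h

/-- If the center has finite index, the set of commutators is finite. -/
private lemma baer_commutatorSet_finite (H : Type*) [Group H]
    (hc : (Subgroup.center H).FiniteIndex) : (commutatorSet H).Finite := by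
  haveI := hc
  haveI : Finite (H ⧸ Subgroup.center H) := by
    apply Nat.finite_of_card_ne_zero
    have := hc.index_ne_zero
    rwa [Subgroup.index_eq_card] at this
  apply Set.Finite.subset (Set.finite_range
    (fun p : (H ⧸ Subgroup.center H) × (H ⧸ Subgroup.center H) => ⁅p.1.out, p.2.out⁆))
  rintro x ⟨g₁, g₂, rfl⟩
  refine ⟨((g₁ : H ⧸ Subgroup.center H), (g₂ : H ⧸ Subgroup.center H)), ?_⟩
  set x₁ := ((g₁ : H ⧸ Subgroup.center H)).out with hx₁
  set x₂ := ((g₂ : H ⧸ Subgroup.center H)).out with hx₂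
  have h₁ : x₁⁻¹ * g₁ ∈ Subgroup.center H :=
    QuotientGroup.eq.mp (QuotientGroup.out_eq' (g₁ : H ⧸ Subgroup.center H))
  have h₂ : x₂⁻¹ * g₂ ∈ Subgroup.center H :=
    QuotientGroup.eq.mp (QuotientGroup.out_eq' (g₂ : H ⧸ Subgroup.center H))
  show ⁅x₁, x₂⁆ = ⁅g₁, g₂⁆
  have e₁ : g₁ = x₁ * (x₁⁻¹ * g₁) := by group
  have e₂ : g₂ = x₂ * (x₂⁻¹ * g₂) := by group
  calc ⁅x₁, x₂⁆ = ⁅x₁ * (x₁⁻¹ * g₁), x₂⁆ :=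
        (baer_commutator_mul_left_eq (Subgroup.mem_center_iff.mp h₁ x₂).symm x₁).symm
    _ = ⁅g₁, x₂⁆ := by rw [← e₁]
    _ = ⁅g₁, x₂ * (x₂⁻¹ * g₂)⁆ :=
        (baer_commutator_mul_right_eq (Subgroup.mem_center_iff.mp h₂ g₁) x₂).symm
    _ = ⁅g₁, g₂⁆ := by rw [← e₂]

private lemma baer_finite_of_fker_frange {H K : Type*} [Group H] [Group K] (f : H →* K)
    (hk : Finite f.ker) (hr : Finite f.range) : Finite H := by
  haveI := hk; haveI := hr
  haveI : Finite (H ⧸ f.ker) :=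
    Finite.of_equiv _ (QuotientGroup.quotientKerEquivRange f).toEquiv.symm
  exact Finite.of_equiv _ (Subgroup.groupEquivQuotientProdSubgroup (s := f.ker)).symm

private lemma baer_finite_subgroup_of_finite_map {K D : Subgroup G} [D.Normal]
    (hD : Finite D) (h : Finite (K.map (QuotientGroup.mk' D))) : Finite K := by
  apply baer_finite_of_fker_frange ((QuotientGroup.mk' D).comp K.subtype)
  · have hker : ((QuotientGroup.mk' D).comp K.subtype).ker = D.subgroupOf K := by
      rw [← MonoidHom.comap_ker, QuotientGroup.ker_mk']
      rfl
    rw [hker]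
    refine Finite.of_injective (fun x : D.subgroupOf K => (⟨x.1.1, x.2⟩ : D)) ?_
    intro a b hab
    simp only [Subtype.mk.injEq] at hab
    exact Subtype.ext (Subtype.ext (congrArg (fun y : D => (y : G)) hab))
  · have hrange : ((QuotientGroup.mk' D).comp K.subtype).range = K.map (QuotientGroup.mk' D) := by
      rw [MonoidHom.range_comp, Subgroup.range_subtype]
    rw [hrange]
    exact h

private theorem baer_aux : ∀ (n : ℕ) (G : Type u) [Group G],
    (Subgroup.upperCentralSeries G n).FiniteIndex → Finite (Subgroup.lowerCentralSeries (⊤ : Subgroup G) n) := by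
  intro n
  induction n with
  | zero =>
    intro G _ h
    have : Finite G := by
      apply Nat.finite_of_card_ne_zero
      rw [← Subgroup.index_bot]
      exact h.index_ne_zero
    exact Subtype.finite
  | succ n ih =>
    intro G _ h
    -- Step 1: apply the induction hypothesis to `G ⧸ center G`.
    have hQfi : (Subgroup.upperCentralSeries (G ⧸ Subgroup.center G) n).FiniteIndex := by
      constructor
      rw [← Subgroup.index_comap_of_surjective
        (Subgroup.upperCentralSeries (G ⧸ Subgroup.center G) n)
        (QuotientGroup.mk'_surjective (Subgroup.center G)),
        Subgroup.comap_upperCentralSeries_quotient_center]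
      exact h.index_ne_zero
    haveI hQfin : Finite (Subgroup.lowerCentralSeries (⊤ : Subgroup (G ⧸ Subgroup.center G)) n) :=
      ih (G ⧸ Subgroup.center G) hQfi
    set F := Subgroup.lowerCentralSeries (⊤ : Subgroup G) n with hFdef
    set FZ := F.map (QuotientGroup.mk' (Subgroup.center G)) with hFZdef
    have hFZset : (FZ : Set (G ⧸ Subgroup.center G)).Finite := by
      have hsub : FZ ≤ Subgroup.lowerCentralSeries (⊤ : Subgroup (G ⧸ Subgroup.center G)) n :=
        Subgroup.lowerCentralSeries.map _ n
      exact Set.Finite.subset (Set.toFinite _) hsub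
    haveI hFZfin : Finite FZ := hFZset.to_subtype
    set m := Nat.card FZ with hmdef
    have hm0 : 0 < m := Nat.card_pos
    -- every `x ∈ F` satisfies `x ^ m ∈ center G`
    have hxm : ∀ x ∈ F, x ^ m ∈ Subgroup.center G := by
      intro x hx
      have h1 : (⟨QuotientGroup.mk' (Subgroup.center G) x,
          Subgroup.mem_map_of_mem _ hx⟩ : FZ) ^ m = 1 := pow_card_eq_one'
      have h2 : (QuotientGroup.mk' (Subgroup.center G) x) ^ m = 1 := by
        have := congrArg Subtype.val h1
        simpa using this
      have h3 : ((x ^ m : G) : G ⧸ Subgroup.center G) = 1 := by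
        rw [QuotientGroup.mk_pow]
        exact h2
      exact (QuotientGroup.eq_one_iff _).mp h3
    -- `center G ∩ F` has finite index in `F`, hence so does `center F`
    have hZF : ((Subgroup.center G).subgroupOf F).FiniteIndex := by
      constructor
      have hker : ((QuotientGroup.mk' (Subgroup.center G)).comp F.subtype).ker
          = (Subgroup.center G).subgroupOf F := by
        rw [← MonoidHom.comap_ker, QuotientGroup.ker_mk']
        rfl
      have hrange : ((QuotientGroup.mk' (Subgroup.center G)).comp F.subtype).range = FZ := by
        rw [MonoidHom.range_comp, Subgroup.range_subtype]
      rw [← hker, Subgroup.index_ker, hrange]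
      exact Nat.card_pos.ne'
    have hcF : (Subgroup.center F).FiniteIndex := by
      have hle : (Subgroup.center G).subgroupOf F ≤ Subgroup.center F := by
        intro x hx
        rw [Subgroup.mem_center_iff]
        intro y
        have hxc := Subgroup.mem_center_iff.mp (Subgroup.mem_subgroupOf.mp hx)
        exact Subtype.ext (hxc y.1)
      constructor
      intro h0
      have hdvd : (Subgroup.center F).index ∣ ((Subgroup.center G).subgroupOf F).index :=
        Subgroup.index_dvd_of_le hle
      exact hZF.index_ne_zero (zero_dvd_iff.mp (h0 ▸ hdvd))
    -- Schur: the commutator subgroup of `F` is finite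
    haveI : Finite (commutatorSet F) := (baer_commutatorSet_finite F hcF).to_subtype
    haveI hDF : Finite (commutator F) := inferInstance
    -- `D = ⁅F, F⁆`
    set D : Subgroup G := ⁅F, F⁆ with hDdef
    have hDmap : D = (commutator F).map F.subtype := by
      show ⁅F, F⁆ = Subgroup.map F.subtype ⁅(⊤ : Subgroup F), ⊤⁆
      rw [Subgroup.map_commutator, ← MonoidHom.range_eq_map, Subgroup.range_subtype]
    haveI hDfin : Finite D := by
      have h5 : (((commutator F).map F.subtype : Subgroup G) : Set G).Finite := by
        rw [Subgroup.coe_map]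
        exact Set.Finite.image _ (Set.toFinite _)
      have h6 : Finite ((commutator F).map F.subtype) := h5.to_subtype
      rwa [← hDmap] at h6
    haveI hFnormal : F.Normal := Subgroup.lowerCentralSeries_normal ⊤ n
    haveI hDnormal : D.Normal := by rw [hDdef]; infer_instance
    -- pass to the quotient `G ⧸ D`
    have hπs : Function.Surjective (QuotientGroup.mk' D) := QuotientGroup.mk'_surjective D
    set A := F.map (QuotientGroup.mk' D) with hAdef
    haveI hAnormal : A.Normal := Subgroup.Normal.map hFnormal _ hπs
    have hAA : ⁅A, A⁆ = ⊥ := by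
      rw [← Subgroup.map_commutator]
      exact (Subgroup.map_eq_bot_iff _).mpr (by rw [QuotientGroup.ker_mk'])
    have hAcomm : ∀ a ∈ A, ∀ b ∈ A, Commute a b := by
      intro a ha b hb
      have hm := Subgroup.commutator_mem_commutator ha hb
      rw [hAA, Subgroup.mem_bot] at hm
      exact commutatorElement_eq_one_iff_commute.mp hm
    have hAmem : ∀ x ∈ A, ∀ g : G ⧸ D, ⁅x, g⁆ ∈ A := by
      intro x hx g
      have he : ⁅x, g⁆ = x * (g * x⁻¹ * g⁻¹) := by group
      rw [he]
      exact mul_mem hx (hAnormal.conj_mem _ (inv_mem hx) g)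
    -- powers of commutators
    have hpow : ∀ x ∈ A, ∀ g : G ⧸ D, ∀ k : ℕ, ⁅x, g⁆ ^ k = ⁅x ^ k, g⁆ := by
      intro x hx g k
      induction k with
      | zero => simp
      | succ k hk =>
        have h1 : ⁅x ^ (k + 1), g⁆ = x * ⁅x ^ k, g⁆ * x⁻¹ * ⁅x, g⁆ := by
          rw [pow_succ']
          group
        have hc : Commute x ⁅x ^ k, g⁆ := hAcomm x hx _ (hAmem _ (pow_mem hx k) g)
        have h2 : x * ⁅x ^ k, g⁆ * x⁻¹ = ⁅x ^ k, g⁆ := by rw [hc.eq]; group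
        rw [pow_succ, hk, h1, h2]
    -- central elements of `G` map to central elements of `G ⧸ D`
    have hcentral : ∀ c ∈ Subgroup.center G, ∀ q : G ⧸ D,
        Commute (QuotientGroup.mk' D c) q := by
      intro c hc q
      obtain ⟨y, rfl⟩ := hπs q
      show _ * _ = _ * _
      rw [← map_mul, ← map_mul, (Subgroup.mem_center_iff.mp hc y).symm]
    -- the set of generators
    set S : Set (G ⧸ D) := {s | ∃ x ∈ A, ∃ g, ⁅x, g⁆ = s} with hSdef
    have hAtop : ⁅A, (⊤ : Subgroup (G ⧸ D))⁆ = Subgroup.closure S := by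
      rw [Subgroup.commutator_def]
      congr 1
      ext s
      simp [hSdef]
    have hSsubA : S ⊆ (A : Set (G ⧸ D)) := by
      rintro s ⟨x, hx, g, rfl⟩
      exact hAmem x hx g
    have hSm : ∀ s ∈ S, s ^ m = 1 := by
      rintro s ⟨x, hx, g, rfl⟩
      obtain ⟨x₀, hx₀, rfl⟩ := Subgroup.mem_map.mp hx
      rw [hpow _ (Subgroup.mem_map_of_mem _ hx₀) g m, ← map_pow]
      exact Commute.commutator_eq (hcentral _ (hxm x₀ hx₀) g)
    -- finiteness of `S`
    haveI hQucsFin : Finite (G ⧸ Subgroup.upperCentralSeries G (n + 1)) := by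
      apply Nat.finite_of_card_ne_zero
      have := h.index_ne_zero
      rwa [Subgroup.index_eq_card] at this
    have hSfin : S.Finite := by
      apply Set.Finite.subset (Set.finite_range
        (fun p : FZ × (G ⧸ Subgroup.upperCentralSeries G (n + 1)) =>
          QuotientGroup.mk' D ⁅(Subgroup.mem_map.mp p.1.2).choose, p.2.out⁆))
      rintro s ⟨x, hx, g, rfl⟩
      obtain ⟨x₀, hx₀, rfl⟩ := Subgroup.mem_map.mp hx
      obtain ⟨y, rfl⟩ := hπs g
      refine ⟨(⟨QuotientGroup.mk' (Subgroup.center G) x₀, Subgroup.mem_map_of_mem _ hx₀⟩,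
        (y : G ⧸ Subgroup.upperCentralSeries G (n + 1))), ?_⟩
      obtain ⟨hx₁F, hx₁eq⟩ := (Subgroup.mem_map.mp
        (Subgroup.mem_map_of_mem (K := F) (QuotientGroup.mk' (Subgroup.center G)) hx₀)).choose_spec
      set x₁ := (Subgroup.mem_map.mp
        (Subgroup.mem_map_of_mem (K := F) (QuotientGroup.mk' (Subgroup.center G)) hx₀)).choose
        with hx₁def
      set y₁ := ((y : G ⧸ Subgroup.upperCentralSeries G (n + 1))).out with hy₁def
      have hc : x₁⁻¹ * x₀ ∈ Subgroup.center G := QuotientGroup.eq.mp hx₁eq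
      have hwmem : y⁻¹ * y₁ ∈ Subgroup.upperCentralSeries G (n + 1) :=
        QuotientGroup.eq.mp (QuotientGroup.out_eq' (y : G ⧸ Subgroup.upperCentralSeries G (n + 1))).symm
      have key : ⁅x₁, y₁⁆ = ⁅x₀, y⁆ := by
        calc ⁅x₁, y₁⁆ = ⁅x₁, y * (y⁻¹ * y₁)⁆ := by rw [show y * (y⁻¹ * y₁) = y₁ by group]
          _ = ⁅x₁, y⁆ := baer_commutator_mul_right_eq (baer_commute hx₁F hwmem) y
          _ = ⁅x₁ * (x₁⁻¹ * x₀), y⁆ :=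
              (baer_commutator_mul_left_eq (Subgroup.mem_center_iff.mp hc y).symm x₁).symm
          _ = ⁅x₀, y⁆ := by rw [show x₁ * (x₁⁻¹ * x₀) = x₀ by group]
      show QuotientGroup.mk' D ⁅x₁, y₁⁆ = _
      rw [key]
      exact map_commutatorElement _ x₀ y
    -- the closure of `S` is finite
    have hCA : Subgroup.closure S ≤ A := (Subgroup.closure_le A).mpr hSsubA
    haveI hCcomm : IsMulCommutative (Subgroup.closure S) :=
      ⟨⟨fun a b => Subtype.ext (hAcomm _ (hCA a.2) _ (hCA b.2))⟩⟩
    haveI hCfg : Group.FG (Subgroup.closure S) := by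
      rw [Group.fg_iff_subgroup_fg]
      exact (Subgroup.fg_iff _).mpr ⟨S, rfl, hSfin⟩
    have hCfin : Finite (Subgroup.closure S) := by
      set T : Subgroup (G ⧸ D) :=
        { carrier := {x | x ∈ A ∧ x ^ m = 1}
          one_mem' := ⟨A.one_mem, one_pow m⟩
          mul_mem' := by
            intro x y hx hy
            exact ⟨A.mul_mem hx.1 hy.1,
              by rw [(hAcomm x hx.1 y hy.1).mul_pow, hx.2, hy.2, one_mul]⟩
          inv_mem' := by
            intro x hx
            exact ⟨A.inv_mem hx.1, by rw [inv_pow, hx.2, inv_one]⟩ } with hTdef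
      have hCT : Subgroup.closure S ≤ T :=
        (Subgroup.closure_le T).mpr (fun s hs => ⟨hSsubA hs, hSm s hs⟩)
      have htor : Monoid.IsTorsion (Subgroup.closure S) := by
        intro x
        rw [isOfFinOrder_iff_pow_eq_one]
        refine ⟨m, hm0, ?_⟩
        have hxT := (hCT x.2).2
        exact Subtype.ext (by simpa using hxT)
      open scoped IsMulCommutative in exact CommGroup.finite_of_fg_torsion _ htor
    -- assemble
    have hmapK : (Subgroup.lowerCentralSeries (⊤ : Subgroup G) (n + 1)).map (QuotientGroup.mk' D)
        = Subgroup.closure S := by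
      have hlcs : Subgroup.lowerCentralSeries (⊤ : Subgroup G) (n + 1) = ⁅F, ⊤⁆ := by
        rw [hFdef]
        rfl
      rw [hlcs, Subgroup.map_commutator, Subgroup.map_top_of_surjective _ hπs, ← hAdef, hAtop]
    have hmapfin : Finite ((Subgroup.lowerCentralSeries (⊤ : Subgroup G) (n + 1)).map (QuotientGroup.mk' D)) := by
      rw [hmapK]
      exact hCfin
    exact baer_finite_subgroup_of_finite_map hDfin hmapfin

end BaerAux

/-- Baer's theorem: if the `n`-th term of the upper central series of a group `G`
has finite index in `G`, then `lowerCentralSeries G n` (i.e. `γ_{n+1}(G)`) is finite. -/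
theorem baer_finite_lowerCentralSeries (G : Type*) [Group G] (n : ℕ)
    (h : (Subgroup.upperCentralSeries G n).FiniteIndex) :
    Finite (Subgroup.lowerCentralSeries (⊤ : Subgroup G) n) := by
  exact baer_aux n G h
end

section
/- Let $G$ be a group. If $N$ is a finite normal subgroup of $G$ such that the quotient $G/N$ is nilpotent, then some term of the upper central series of $G$ has finite index in $G$, i.e. there exists a natural number $n$ such that `upperCentralSeries G n` has finite index in $G$. -/
section HallAux

open Subgroup
open scoped commutatorElement

variable {G : Type*} [Group G]

/-- Containment form of the three subgroups lemma, for normal subgroups. -/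
private lemma three_subgroups_le (H₁ H₂ H₃ : Subgroup G)
    [H₁.Normal] [H₂.Normal] [H₃.Normal] :
    ⁅⁅H₁, H₂⁆, H₃⁆ ≤ ⁅⁅H₂, H₃⁆, H₁⁆ ⊔ ⁅⁅H₃, H₁⁆, H₂⁆ := by
  set Q : Subgroup G := ⁅⁅H₂, H₃⁆, H₁⁆ ⊔ ⁅⁅H₃, H₁⁆, H₂⁆ with hQdef
  haveI : Q.Normal := Subgroup.sup_normal _ _
  set π := QuotientGroup.mk' Q with hπ
  have hker : π.ker = Q := QuotientGroup.ker_mk' Q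
  have h1 : ⁅⁅H₂.map π, H₃.map π⁆, H₁.map π⁆ = ⊥ := by
    rw [← map_commutator, ← map_commutator, Subgroup.map_eq_bot_iff, hker]
    exact le_sup_left
  have h2 : ⁅⁅H₃.map π, H₁.map π⁆, H₂.map π⁆ = ⊥ := by
    rw [← map_commutator, ← map_commutator, Subgroup.map_eq_bot_iff, hker]
    exact le_sup_right
  have h3 := Subgroup.commutator_commutator_eq_bot_of_rotate h1 h2
  rw [← map_commutator, ← map_commutator, Subgroup.map_eq_bot_iff, hker] at h3
  exact h3

/-- Key step (essentially P. Hall): if `γ_{c+2}(G)` is finite, then the image of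
`γ_{c+1}(G)` in `G ⧸ Z_{c+3}(G)` is finite. -/
private lemma hall_key (G : Type*) [Group G] (c : ℕ)
    [hK : Finite ((⊤ : Subgroup G).lowerCentralSeries (c + 1))] :
    ∃ r : ℕ,
      Finite (((⊤ : Subgroup G).lowerCentralSeries c).map
        (QuotientGroup.mk' (Subgroup.upperCentralSeries G r))) := by
  classical
  set K : Subgroup G := (⊤ : Subgroup G).lowerCentralSeries (c + 1) with hKdef
  let ρ : G →* MulAut K := MulAut.conjNormal
  set C : Subgroup G := ρ.ker with hCdef
  haveI hCn : C.Normal := ρ.normal_ker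
  haveI hCfi : C.FiniteIndex := Subgroup.finiteIndex_ker ρ
  have hCcent : ∀ x ∈ C, ∀ k ∈ K, x * k * x⁻¹ = k := by
    intro x hx k hk
    have h1 : ρ x = 1 := hx
    have h2 : ((ρ x ⟨k, hk⟩ : K) : G) = x * k * x⁻¹ := MulAut.conjNormal_apply x ⟨k, hk⟩
    rw [h1] at h2
    simpa using h2.symm
  have hCK : C ≤ centralizer (K : Set G) := by
    intro x hx
    rw [mem_centralizer_iff]
    intro k hk
    have := hCcent x hx k hk
    calc k * x = (x * k * x⁻¹) * x := by rw [this]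
      _ = x * k := by group
  -- the filtration
  set Y : ℕ → Subgroup G := fun j => (⊤ : Subgroup G).lowerCentralSeries j ⊓ C with hYdef
  haveI hYn : ∀ j, (Y j).Normal := fun j => Subgroup.normal_inf_normal _ _
  have hYsucc : ∀ k : ℕ, ⁅Y k, (⊤ : Subgroup G)⁆ ≤ Y (k + 1) := by
    intro k
    refine le_inf ?_ ?_
    · exact commutator_mono inf_le_left le_rfl
    · exact le_trans (Subgroup.commutator_le_left _ _) inf_le_right
  have chain : ∀ n j k : ℕ, 2 * c + 2 ≤ j + k + n →
      ⁅Y j, Y k⁆ ≤ Subgroup.upperCentralSeries G n := by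
    intro n
    induction n with
    | zero =>
      intro j k h
      have hjk : c + 1 ≤ j ∨ c + 1 ≤ k := by omega
      rw [Subgroup.upperCentralSeries_zero]
      rcases hjk with h' | h'
      · have hYK : Y j ≤ K := le_trans inf_le_left (Subgroup.lowerCentralSeries_antitone ⊤ h')
        have hb : ⁅Y k, Y j⁆ = ⊥ := by
          rw [commutator_eq_bot_iff_le_centralizer]
          exact le_trans inf_le_right (le_trans hCK (centralizer_le hYK))
        rw [commutator_comm, hb]
      · have hYK : Y k ≤ K := le_trans inf_le_left (Subgroup.lowerCentralSeries_antitone ⊤ h')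
        have hb : ⁅Y j, Y k⁆ = ⊥ := by
          rw [commutator_eq_bot_iff_le_centralizer]
          exact le_trans inf_le_right (le_trans hCK (centralizer_le hYK))
        rw [hb]
    | succ n ih =>
      intro j k h
      have hstep : ⁅⁅Y j, Y k⁆, (⊤ : Subgroup G)⁆ ≤ Subgroup.upperCentralSeries G n := by
        refine le_trans (three_subgroups_le _ _ _) (sup_le ?_ ?_)
        · exact le_trans (commutator_mono (hYsucc k) le_rfl) (ih (k + 1) j (by omega))
        · refine le_trans (commutator_mono ?_ le_rfl) (ih (j + 1) k (by omega))
          rw [commutator_comm]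
          exact hYsucc j
      intro a ha
      rw [Subgroup.mem_upperCentralSeries_succ_iff]
      intro y
      exact hstep (commutator_mem_commutator ha (mem_top y))
  have hY0 : Y 0 = C := by
    simp only [hYdef]
    rw [Subgroup.lowerCentralSeries_zero, top_inf_eq]
  set M : Subgroup G := (⊤ : Subgroup G).lowerCentralSeries c with hMdef
  set L : Subgroup G := Y c with hLdef
  have hLC : ⁅L, C⁆ ≤ Subgroup.upperCentralSeries G (c + 2) := by
    rw [← hY0]
    exact chain (c + 2) c 0 (by omega)
  set r : ℕ := c + 3 with hrdef
  set Z : Subgroup G := Subgroup.upperCentralSeries G r with hZdef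
  haveI : Finite (G ⧸ C) := Subgroup.finite_quotient_of_finiteIndex
  set V : G ⧸ C → Subgroup G := fun q => centralizer ({q.out} : Set G) with hVdef
  -- membership criterion
  have hWZ : ∀ m, m ∈ L → (∀ q : G ⧸ C, m ∈ V q) → m ∈ Z := by
    intro m hmL hmV
    have : m ∈ Subgroup.upperCentralSeries G (c + 2 + 1) := by
      rw [Subgroup.mem_upperCentralSeries_succ_iff]
      intro y
      set q : G ⧸ C := QuotientGroup.mk y with hq
      set t : G := q.out with ht
      have hx : t⁻¹ * y ∈ C := by
        apply QuotientGroup.eq.mp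
        exact QuotientGroup.out_eq' q
      have hcm : t * m = m * t := by
        have := (mem_centralizer_iff.mp (hmV q)) t rfl
        exact this
      have hu : ⁅m, t⁻¹ * y⁆ ∈ Subgroup.upperCentralSeries G (c + 2) := by
        apply hLC
        exact commutator_mem_commutator hmL hx
      have hkey : m * y * m⁻¹ * y⁻¹ = t * ⁅m, t⁻¹ * y⁆ * t⁻¹ := by
        have hmt : t * m * t⁻¹ = m := by rw [hcm]; group
        calc m * y * m⁻¹ * y⁻¹ = (t * m * t⁻¹) * y * m⁻¹ * y⁻¹ := by rw [hmt]
          _ = t * ⁅m, t⁻¹ * y⁆ * t⁻¹ := by rw [commutatorElement_def]; group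
      rw [commutatorElement_def, hkey]
      exact (inferInstance : (Subgroup.upperCentralSeries G (c + 2)).Normal).conj_mem _ hu t
    exact this
  -- finiteness of the relative indices
  have hLM : L ≤ M := inf_le_left
  have hfib : ∀ q : G ⧸ C, ((V q).subgroupOf L).FiniteIndex := by
    intro q
    set t : G := q.out with ht
    have hf : ∀ m : L, ⁅(m : G), t⁆ ∈ K := by
      intro m
      have hm : (m : G) ∈ M := hLM m.2
      exact commutator_mem_commutator hm (mem_top t)
    let f : L →* (K)ᵐᵒᵖ :=
      { toFun := fun m => MulOpposite.op ⟨⁅(m : G), t⁆, hf m⟩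
        map_one' := by
          have : ⁅(1 : G), t⁆ = 1 := by group
          simp [this]
        map_mul' := by
          intro m m'
          have h2 : (m : G) ∈ C := (inf_le_right : Y c ≤ C) m.2
          have h3 : (m : G) * ⁅(m' : G), t⁆ * (m : G)⁻¹ = ⁅(m' : G), t⁆ :=
            hCcent _ h2 _ (hf m')
          have h4 : ⁅((m * m' : L) : G), t⁆ = ⁅(m' : G), t⁆ * ⁅(m : G), t⁆ := by
            push_cast
            calc ⁅(m : G) * (m' : G), t⁆
                = ((m : G) * ⁅(m' : G), t⁆ * (m : G)⁻¹) * ⁅(m : G), t⁆ := by group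
              _ = ⁅(m' : G), t⁆ * ⁅(m : G), t⁆ := by rw [h3]
          rw [← MulOpposite.op_mul]
          exact congrArg MulOpposite.op (Subtype.ext h4) }
    have hker : f.ker = (V q).subgroupOf L := by
      ext m
      constructor
      · intro hm
        have : ⁅(m : G), t⁆ = 1 := by
          have := congrArg MulOpposite.unop hm
          exact congrArg Subtype.val this
        have hcomm : (m : G) * t = t * (m : G) :=
          commutatorElement_eq_one_iff_mul_comm.mp this
        show (m : G) ∈ V q
        rw [hVdef, mem_centralizer_iff]
        rintro h rfl
        exact hcomm.symm
      · intro hm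
        have hcomm : t * (m : G) = (m : G) * t := mem_centralizer_iff.mp hm t rfl
        show f m = 1
        have : ⁅(m : G), t⁆ = 1 := commutatorElement_eq_one_iff_mul_comm.mpr hcomm.symm
        simp only [f, MonoidHom.coe_mk, OneHom.coe_mk]
        rw [show (⟨⁅(m : G), t⁆, hf m⟩ : K) = 1 from Subtype.ext this]
        simp
    haveI : Finite ((K)ᵐᵒᵖ) := Finite.of_equiv _ MulOpposite.opEquiv
    haveI := Subgroup.finiteIndex_ker f
    rw [← hker]
    infer_instance
  set I : Subgroup G := ⨅ q : G ⧸ C, V q with hIdef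
  haveI hIfi : (I.subgroupOf L).FiniteIndex := by
    have : I.subgroupOf L = ⨅ q : G ⧸ C, (V q).subgroupOf L := by
      simp only [hIdef, subgroupOf, comap_iInf]
    rw [this]
    exact Subgroup.finiteIndex_iInf fun q => hfib q
  set W : Subgroup G := L ⊓ I with hWdef
  have hWL : W ≤ L := inf_le_left
  have hWZ' : W ≤ Z := by
    intro m hm
    exact hWZ m hm.1 fun q => (mem_iInf.mp hm.2) q
  have h1 : W.relIndex L ≠ 0 := by
    have : W.relIndex L = I.relIndex L := by
      rw [hWdef]
      exact inf_relIndex_left L I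
    rw [this]
    exact hIfi.index_ne_zero
  have h2 : L.relIndex M ≠ 0 := by
    have hLeq : L = M ⊓ C := rfl
    have : L.relIndex M = C.relIndex M := by rw [hLeq]; exact inf_relIndex_left M C
    rw [this]
    exact fun h0 =>
      hCfi.index_ne_zero (Nat.eq_zero_of_zero_dvd (h0 ▸ relIndex_dvd_index_of_normal C M))
  have h3 : W.relIndex M ≠ 0 := by
    rw [← relIndex_mul_relIndex W L M hWL hLM]
    exact Nat.mul_ne_zero h1 h2
  have h4 : Z.relIndex M ≠ 0 :=
    fun h0 => h3 (Nat.eq_zero_of_zero_dvd (h0 ▸ relIndex_dvd_of_le_left M hWZ'))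
  refine ⟨r, ?_⟩
  refine Nat.finite_of_card_ne_zero ?_
  have h5 : Nat.card (M.map (QuotientGroup.mk' Z))
      = ((QuotientGroup.mk' Z).ker).relIndex M :=
    (Subgroup.relIndex_ker M (QuotientGroup.mk' Z)).symm
  rw [h5, QuotientGroup.ker_mk']
  exact h4

/-- Lower central series of a quotient is contained in the image. -/
private lemma lcs_le_map_of_surjective {G H : Type*} [Group G] [Group H]
    (f : G →* H) (hf : Function.Surjective f) (n : ℕ) :
    (⊤ : Subgroup H).lowerCentralSeries n ≤ ((⊤ : Subgroup G).lowerCentralSeries n).map f := by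
  induction n with
  | zero =>
    rw [Subgroup.lowerCentralSeries_zero, Subgroup.lowerCentralSeries_zero]
    rw [← MonoidHom.range_eq_map, MonoidHom.range_eq_top_of_surjective f hf]
  | succ n ih =>
    show ⁅(⊤ : Subgroup H).lowerCentralSeries n, (⊤ : Subgroup H)⁆ ≤ _
    have : ((⊤ : Subgroup G).lowerCentralSeries (n + 1)).map f
        = ⁅((⊤ : Subgroup G).lowerCentralSeries n).map f, (⊤ : Subgroup G).map f⁆ := by
      rw [← map_commutator]
      rfl
    rw [this]
    refine commutator_mono ih ?_
    rw [← MonoidHom.range_eq_map, MonoidHom.range_eq_top_of_surjective f hf]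
  
/-- Pulling back the upper central series of `G ⧸ Z_r(G)` lands in the upper
central series of `G`. -/
private lemma comap_ucs_le (G : Type*) [Group G] (r : ℕ) (j : ℕ) :
    (Subgroup.upperCentralSeries (G ⧸ Subgroup.upperCentralSeries G r) j).comap
        (QuotientGroup.mk' (Subgroup.upperCentralSeries G r))
      ≤ Subgroup.upperCentralSeries G (j + r) := by
  induction j with
  | zero =>
    rw [Subgroup.upperCentralSeries_zero, MonoidHom.comap_bot, QuotientGroup.ker_mk']
    rw [show 0 + r = r by omega]
  | succ j ih =>
    intro x hx
    rw [show j + 1 + r = (j + r) + 1 by omega, Subgroup.mem_upperCentralSeries_succ_iff]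
    intro y
    apply ih
    rw [mem_comap]
    have hx' := mem_comap.mp hx
    rw [Subgroup.mem_upperCentralSeries_succ_iff] at hx'
    have := hx' (QuotientGroup.mk' (Subgroup.upperCentralSeries G r) y)
    simpa [map_mul, map_inv] using this

/-- P. Hall's theorem: if some term of the lower central series is finite, then some
term of the upper central series has finite index. -/
private theorem hall_finite_lcs : ∀ (n : ℕ) (G : Type*) [Group G],
    Finite ((⊤ : Subgroup G).lowerCentralSeries n) → ∃ j : ℕ, (Subgroup.upperCentralSeries G j).FiniteIndex := by
  intro n
  induction n with
  | zero =>
    intro G _ hfin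
    have htop : Finite ((⊤ : Subgroup G)) := by
      rw [← Subgroup.lowerCentralSeries_zero ⊤]; exact hfin
    have : Finite G := Finite.of_equiv _ Subgroup.topEquiv.toEquiv
    exact ⟨0, inferInstance⟩
  | succ n ih =>
    intro G _ hfin
    haveI := hfin
    obtain ⟨r, hr⟩ := hall_key G n
    set Z : Subgroup G := Subgroup.upperCentralSeries G r with hZ
    set π := QuotientGroup.mk' Z with hπ
    haveI hQfin : Finite ((⊤ : Subgroup (G ⧸ Z)).lowerCentralSeries n) := by
      have hle : (⊤ : Subgroup (G ⧸ Z)).lowerCentralSeries n ≤ ((⊤ : Subgroup G).lowerCentralSeries n).map π :=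
        lcs_le_map_of_surjective π (QuotientGroup.mk'_surjective Z) n
      haveI := hr
      exact Set.Finite.to_subtype
        (Set.Finite.subset (Set.toFinite (((⊤ : Subgroup G).lowerCentralSeries n).map π : Set (G ⧸ Z))) hle)
    obtain ⟨j, hj⟩ := ih (G ⧸ Z) hQfin
    refine ⟨j + r, ?_⟩
    have hcomap : ((Subgroup.upperCentralSeries (G ⧸ Z) j).comap π).FiniteIndex := by
      constructor
      rw [Subgroup.index_comap_of_surjective _ (QuotientGroup.mk'_surjective Z)]
      exact hj.index_ne_zero
    exact ⟨fun h0 => hcomap.index_ne_zero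
      (Nat.eq_zero_of_zero_dvd (h0 ▸ Subgroup.index_dvd_of_le (comap_ucs_le G r j)))⟩

end HallAux

/-- If `N` is a finite normal subgroup of `G` with `G ⧸ N` nilpotent, then some
term of the upper central series of `G` has finite index in `G`. -/
theorem upperCentralSeries_finiteIndex_of_finite_normal_nilpotent_quotient
    (G : Type*) [Group G] (N : Subgroup G) [N.Normal] [Finite N]
    (h : Group.IsNilpotent (G ⧸ N)) :
    ∃ n : ℕ, (upperCentralSeries G n).FiniteIndex := by
  obtain ⟨n, hn⟩ := Subgroup.nilpotent_iff_lowerCentralSeries.mp h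
  have hle : (⊤ : Subgroup G).lowerCentralSeries n ≤ N := by
    have h1 := Subgroup.lowerCentralSeries.map (QuotientGroup.mk' N) n
    rw [hn] at h1
    have h2 : ((⊤ : Subgroup G).lowerCentralSeries n).map (QuotientGroup.mk' N) = ⊥ := le_bot_iff.mp h1
    have h3 := (Subgroup.map_eq_bot_iff _).mp h2
    rwa [QuotientGroup.ker_mk'] at h3
  have hfin : Finite ((⊤ : Subgroup G).lowerCentralSeries n) :=
    Set.Finite.to_subtype (Set.Finite.subset (Set.toFinite (N : Set G)) hle)
  exact hall_finite_lcs n G hfin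
end

section
/- Let $K$ be a group, $k$ a natural number, and let $C$ and $F$ be subgroups of $K$ such that $C$ is contained in the $k$-th term $Z_k(K)$ of the upper central series of $K$ and $C \sqcup F = K$ (so $K = CF$, since $C$ is contained in a normal subgroup of $K$). Then $\gamma_{k+1}(K) = \gamma_{k+1}(F)$; precisely, `lowerCentralSeries K k` equals the image of `lowerCentralSeries F k` under the inclusion map $F \hookrightarrow K$. -/
open Subgroup
open scoped commutatorElement

section aux
variable {K : Type*} [Group K]

set_option linter.unnecessarySimpa false

/-- `[Z_n, K] ≤ Z_{n-1}`, stated with truncated subtraction. -/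
lemma aux_ucs_comm_top (n : ℕ) :
    ⁅Subgroup.upperCentralSeries K n, (⊤ : Subgroup K)⁆ ≤ Subgroup.upperCentralSeries K (n - 1) := by
  cases n with
  | zero => simpa using commutator_le_left _ _
  | succ n =>
      rw [commutator_le]
      intro g hg h _
      simpa [commutatorElement_def, mul_assoc] using
        (Subgroup.mem_upperCentralSeries_succ_iff.mp hg h)

/-- Three subgroups lemma relative to a normal subgroup. -/
lemma aux_three_subgroups {N H₁ H₂ H₃ : Subgroup K} [N.Normal]
    (h1 : ⁅⁅H₂, H₃⁆, H₁⁆ ≤ N) (h2 : ⁅⁅H₃, H₁⁆, H₂⁆ ≤ N) :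
    ⁅⁅H₁, H₂⁆, H₃⁆ ≤ N := by
  let π := QuotientGroup.mk' N
  have hker : π.ker = N := QuotientGroup.ker_mk' N
  have key := Subgroup.commutator_commutator_eq_bot_of_rotate
    (H₁ := Subgroup.map π H₁) (H₂ := Subgroup.map π H₂) (H₃ := Subgroup.map π H₃)
    (by rw [← map_commutator, ← map_commutator, Subgroup.map_eq_bot_iff, hker]; exact h1)
    (by rw [← map_commutator, ← map_commutator, Subgroup.map_eq_bot_iff, hker]; exact h2)
  rw [← map_commutator, ← map_commutator, Subgroup.map_eq_bot_iff, hker] at key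
  exact key

/-- `[γ_{i+1}, Z_m] ≤ Z_{m - i - 1}`. -/
lemma aux_lcs_ucs (i : ℕ) : ∀ m : ℕ,
    ⁅(⊤ : Subgroup K).lowerCentralSeries i, Subgroup.upperCentralSeries K m⁆ ≤ Subgroup.upperCentralSeries K (m - (i + 1)) := by
  induction i with
  | zero =>
      intro m
      rw [Subgroup.lowerCentralSeries_zero, commutator_comm]
      exact aux_ucs_comm_top m
  | succ i ih =>
      intro m
      show ⁅⁅(⊤ : Subgroup K).lowerCentralSeries i, ⊤⁆, Subgroup.upperCentralSeries K m⁆ ≤ _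
      apply aux_three_subgroups
      · calc ⁅⁅(⊤ : Subgroup K), Subgroup.upperCentralSeries K m⁆, (⊤ : Subgroup K).lowerCentralSeries i⁆
            ≤ ⁅Subgroup.upperCentralSeries K (m - 1), (⊤ : Subgroup K).lowerCentralSeries i⁆ := by
              apply commutator_mono _ le_rfl
              rw [commutator_comm]; exact aux_ucs_comm_top m
          _ ≤ Subgroup.upperCentralSeries K (m - 1 - (i + 1)) := by
              rw [commutator_comm]; exact ih (m - 1)
          _ ≤ Subgroup.upperCentralSeries K (m - (i + 1 + 1)) := by
              apply Subgroup.upperCentralSeries_mono; omega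
      · calc ⁅⁅Subgroup.upperCentralSeries K m, (⊤ : Subgroup K).lowerCentralSeries i⁆, (⊤ : Subgroup K)⁆
            ≤ ⁅Subgroup.upperCentralSeries K (m - (i + 1)), (⊤ : Subgroup K)⁆ := by
              apply commutator_mono _ le_rfl
              rw [commutator_comm]; exact ih m
          _ ≤ Subgroup.upperCentralSeries K (m - (i + 1) - 1) := aux_ucs_comm_top _
          _ ≤ Subgroup.upperCentralSeries K (m - (i + 1 + 1)) := by
              apply Subgroup.upperCentralSeries_mono; omega

/-- Elementwise commutator-of-sups lemma. -/
lemma aux_commutator_sup_le {A B C D : Subgroup K} [B.Normal] [D.Normal]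
    (hB : ∀ b ∈ B, ∀ q : K, b * q = q * b)
    (hAD : ∀ a ∈ A, ∀ d ∈ D, a * d = d * a) :
    ⁅A ⊔ B, C ⊔ D⁆ ≤ ⁅A, C⁆ := by
  rw [commutator_le]
  intro g hg h hh
  rw [← SetLike.mem_coe, Subgroup.mul_normal] at hg hh
  obtain ⟨a, ha, b, hb, rfl⟩ := hg
  obtain ⟨c, hc, d, hd, rfl⟩ := hh
  have h1 : ⁅a * b, c * d⁆ = ⁅a, c * d⁆ := by
    simp only [commutatorElement_def, mul_inv_rev]
    have e1 : b * (c * d) = (c * d) * b := hB b hb (c * d)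
    calc a * b * (c * d) * (b⁻¹ * a⁻¹) * (d⁻¹ * c⁻¹)
        = a * (b * (c * d) * b⁻¹) * a⁻¹ * (d⁻¹ * c⁻¹) := by group
      _ = a * ((c * d) * b * b⁻¹) * a⁻¹ * (d⁻¹ * c⁻¹) := by rw [e1]
      _ = a * (c * d) * a⁻¹ * (d⁻¹ * c⁻¹) := by group
  have e2 : d * a⁻¹ = a⁻¹ * d := by
    have e : Commute a d := hAD a ha d hd
    exact e.inv_left.eq.symm
  have h2 : ⁅a, c * d⁆ = ⁅a, c⁆ := by
    simp only [commutatorElement_def, mul_inv_rev]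
    calc a * (c * d) * a⁻¹ * (d⁻¹ * c⁻¹)
        = a * c * (d * a⁻¹ * d⁻¹) * c⁻¹ := by group
      _ = a * c * (a⁻¹ * d * d⁻¹) * c⁻¹ := by rw [e2]
      _ = a * c * a⁻¹ * c⁻¹ := by group
  rw [h1, h2]
  exact commutator_mem_commutator ha hc
end aux

/-- Hekster's Lemma 2.4: if `C ≤ Z_k(K)` and `C ⊔ F = K`, then
`γ_{k+1}(K) = γ_{k+1}(F)` (the latter viewed inside `K`). -/
theorem lowerCentralSeries_eq_map_of_sup_eq_top
    (K : Type*) [Group K] (k : ℕ) (C F : Subgroup K)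
    (hC : C ≤ Subgroup.upperCentralSeries K k) (hCF : C ⊔ F = ⊤) :
    (⊤ : Subgroup K).lowerCentralSeries k = Subgroup.map F.subtype ((⊤ : Subgroup F).lowerCentralSeries k) := by
  set M : ℕ → Subgroup K := fun i => Subgroup.map F.subtype ((⊤ : Subgroup F).lowerCentralSeries i) with hM
  have hMF : M 0 = F := by
    simp only [hM, Subgroup.lowerCentralSeries_zero, ← MonoidHom.range_eq_map, Subgroup.range_subtype]
  have hMle : ∀ i, M i ≤ (⊤ : Subgroup K).lowerCentralSeries i := fun i =>
    Subgroup.lowerCentralSeries_map_subtype_le F i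
  have hMsucc : ∀ i, M (i + 1) = ⁅M i, F⁆ := by
    intro i
    show Subgroup.map F.subtype ⁅(⊤ : Subgroup F).lowerCentralSeries i, ⊤⁆ = _
    rw [Subgroup.map_commutator]
    congr 1
  have htop : (⊤ : Subgroup K) = F ⊔ Subgroup.upperCentralSeries K k :=
    le_antisymm (by rw [← hCF]; exact sup_le (le_sup_of_le_right hC) le_sup_left) le_top
  have key : ∀ i, (⊤ : Subgroup K).lowerCentralSeries i ≤ M i ⊔ Subgroup.upperCentralSeries K (k - i) := by
    intro i
    induction i with
    | zero =>
        rw [Subgroup.lowerCentralSeries_zero, hMF, Nat.sub_zero]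
        exact htop.le
    | succ i ih =>
        set N := Subgroup.upperCentralSeries K (k - (i + 1)) with hN
        set π := QuotientGroup.mk' N with hπ
        have hsurj : Function.Surjective π := QuotientGroup.mk'_surjective N
        -- reduce to the quotient
        suffices hq : Subgroup.map π ((⊤ : Subgroup K).lowerCentralSeries (i + 1)) ≤ Subgroup.map π (M (i + 1)) by
          calc (⊤ : Subgroup K).lowerCentralSeries (i + 1)
              ≤ Subgroup.comap π (Subgroup.map π ((⊤ : Subgroup K).lowerCentralSeries (i + 1))) :=
                Subgroup.le_comap_map π _
            _ ≤ Subgroup.comap π (Subgroup.map π (M (i + 1))) := Subgroup.comap_mono hq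
            _ = M (i + 1) ⊔ N := by rw [Subgroup.comap_map_eq, QuotientGroup.ker_mk']
        set A := Subgroup.map π (M i)
        set B := Subgroup.map π (Subgroup.upperCentralSeries K (k - i))
        set Cq := Subgroup.map π F
        set D := Subgroup.map π (Subgroup.upperCentralSeries K k)
        haveI : B.Normal := (inferInstance : (Subgroup.upperCentralSeries K (k - i)).Normal).map π hsurj
        haveI : D.Normal := (inferInstance : (Subgroup.upperCentralSeries K k).Normal).map π hsurj
        have hBtop : ⁅B, (⊤ : Subgroup (K ⧸ N))⁆ = ⊥ := by
          rw [← Subgroup.map_top_of_surjective π hsurj, ← Subgroup.map_commutator,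
            Subgroup.map_eq_bot_iff, QuotientGroup.ker_mk']
          exact (aux_ucs_comm_top (k - i)).trans (by rw [Nat.sub_sub])
        have hADbot : ⁅A, D⁆ = ⊥ := by
          rw [← Subgroup.map_commutator, Subgroup.map_eq_bot_iff, QuotientGroup.ker_mk']
          exact (Subgroup.commutator_mono (hMle i) le_rfl).trans (aux_lcs_ucs i k)
        have hB : ∀ b ∈ B, ∀ q : K ⧸ N, b * q = q * b := by
          intro b hb q
          have : ⁅b, q⁆ ∈ (⊥ : Subgroup (K ⧸ N)) := by
            rw [← hBtop]; exact Subgroup.commutator_mem_commutator hb (Subgroup.mem_top q)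
          exact commutatorElement_eq_one_iff_mul_comm.mp (Subgroup.mem_bot.mp this)
        have hAD : ∀ a ∈ A, ∀ d ∈ D, a * d = d * a := by
          intro a ha d hd
          have : ⁅a, d⁆ ∈ (⊥ : Subgroup (K ⧸ N)) := by
            rw [← hADbot]; exact Subgroup.commutator_mem_commutator ha hd
          exact commutatorElement_eq_one_iff_mul_comm.mp (Subgroup.mem_bot.mp this)
        calc Subgroup.map π ((⊤ : Subgroup K).lowerCentralSeries (i + 1))
            = ⁅Subgroup.map π ((⊤ : Subgroup K).lowerCentralSeries i), Subgroup.map π ⊤⁆ :=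
              Subgroup.map_commutator _ _ _
          _ ≤ ⁅A ⊔ B, Cq ⊔ D⁆ := by
              apply Subgroup.commutator_mono
              · rw [← Subgroup.map_sup]; exact Subgroup.map_mono ih
              · rw [← Subgroup.map_sup]; exact Subgroup.map_mono htop.le
          _ ≤ ⁅A, Cq⁆ := aux_commutator_sup_le hB hAD
          _ = Subgroup.map π (M (i + 1)) := by rw [hMsucc, Subgroup.map_commutator]
  refine le_antisymm ?_ (hMle k)
  have := key k
  rwa [Nat.sub_self, Subgroup.upperCentralSeries_zero, sup_bot_eq] at this
end

section
/- Let $G$ be a finitely generated group such that for every normal subgroup $K$ of $G$ with $K \neq G$, the center of the quotient group $G/K$ is nontrivial. Then $G$ is nilpotent. -/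
/-!
Auxiliary development: a finitely generated hypercentral group is nilpotent.

We build the transfinite upper central series as the ordinal approximation
sequence `Zs` of the monotone operator `stepF K = closure {g | ∀ x, ⁅g,x⁆ ∈ K}`,
and show via a height argument on finitely many normal generators of the
lower central series that the lower central series reaches `⊥` in finitely
many steps.
-/

open Subgroup OrdinalApprox
open scoped commutatorElement

namespace HypercentralAux

universe u
variable {G : Type u} [Group G]

/-- The set of elements central modulo `K`. -/
def stepSet (K : Subgroup G) : Set G := {g | ∀ x : G, ⁅g, x⁆ ∈ K}

theorem stepSet_mono {K L : Subgroup G} (h : K ≤ L) : stepSet K ⊆ stepSet L :=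
  fun _ hg x => h (hg x)

/-- If `K` is normal, `stepSet K` is a subgroup: the preimage of the center of `G ⧸ K`. -/
def stepGroup (K : Subgroup G) (hK : K.Normal) : Subgroup G where
  carrier := stepSet K
  one_mem' := by
    intro x
    have : ⁅(1 : G), x⁆ = 1 := by group
    rw [this]; exact K.one_mem
  mul_mem' := by
    intro a b ha hb x
    have : ⁅a * b, x⁆ = a * ⁅b, x⁆ * a⁻¹ * ⁅a, x⁆ := by
      simp only [commutatorElement_def]; group
    rw [this]
    exact K.mul_mem (hK.conj_mem _ (hb x) a) (ha x)
  inv_mem' := by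
    intro a ha x
    have : ⁅a⁻¹, x⁆ = a⁻¹ * (⁅a, x⁆)⁻¹ * a⁻¹⁻¹ := by
      simp only [commutatorElement_def]; group
    rw [this]
    exact hK.conj_mem _ (K.inv_mem (ha x)) a⁻¹

/-- The step operator, as a monotone map on subgroups. -/
def stepF : Subgroup G →o Subgroup G :=
  ⟨fun K => Subgroup.closure (stepSet K),
   fun _ _ h => Subgroup.closure_mono (stepSet_mono h)⟩

theorem stepF_eq {K : Subgroup G} (hK : K.Normal) : stepF K = stepGroup K hK :=
  Subgroup.closure_eq (stepGroup K hK)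

theorem mem_stepF {K : Subgroup G} (hK : K.Normal) {g : G} :
    g ∈ stepF K ↔ ∀ x : G, ⁅g, x⁆ ∈ K := by
  rw [stepF_eq hK]; rfl

theorem le_stepF {K : Subgroup G} (hK : K.Normal) : K ≤ stepF K := by
  intro g hg
  rw [mem_stepF hK]
  intro x
  have : ⁅g, x⁆ = g * (x * g⁻¹ * x⁻¹) := by
    simp only [commutatorElement_def]; group
  rw [this]
  exact K.mul_mem hg (hK.conj_mem _ (K.inv_mem hg) x)

theorem stepF_normal {K : Subgroup G} (hK : K.Normal) : (stepF K).Normal := by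
  rw [stepF_eq hK]
  constructor
  intro g hg h x
  have key : ⁅h * g * h⁻¹, x⁆ = h * ⁅g, h⁻¹ * x * h⁆ * h⁻¹ := by
    simp only [commutatorElement_def]; group
  rw [key]
  exact hK.conj_mem _ (hg (h⁻¹ * x * h)) h

/-- The supremum of a set of normal subgroups is normal. -/
theorem normal_sSup {S : Set (Subgroup G)} (hS : ∀ K ∈ S, K.Normal) : (sSup S).Normal := by
  let C : Subgroup G :=
    { carrier := {n | ∀ g : G, g * n * g⁻¹ ∈ sSup S}
      one_mem' := by intro g; simpa using (sSup S).one_mem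
      mul_mem' := by
        intro a b ha hb g
        have : g * (a * b) * g⁻¹ = (g * a * g⁻¹) * (g * b * g⁻¹) := by group
        rw [this]
        exact (sSup S).mul_mem (ha g) (hb g)
      inv_mem' := by
        intro a ha g
        have : g * a⁻¹ * g⁻¹ = (g * a * g⁻¹)⁻¹ := by group
        rw [this]
        exact (sSup S).inv_mem (ha g) }
  have hle : sSup S ≤ C := by
    apply sSup_le
    intro K hK n hn g
    exact le_sSup hK ((hS K hK).conj_mem n hn g)
  exact ⟨fun n hn g => hle hn g⟩

variable (G)

/-- The transfinite upper central series of `G`. -/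
noncomputable def Zs : Ordinal.{u} → Subgroup G := lfpApprox stepF ⊥

variable {G}

theorem Zs_eq (a : Ordinal.{u}) :
    Zs G a = sSup ({K | ∃ β, ∃ _ : β < a, stepF (Zs G β) = K} ∪ {⊥}) := by
  rw [Zs, lfpApprox]
  apply le_antisymm
  · refine sup_le (le_sSup (Or.inr rfl)) (iSup₂_le fun b hb => le_sSup (Or.inl ⟨b, hb, rfl⟩))
  · apply sSup_le
    rintro K (⟨β, hβ, rfl⟩ | hK)
    · exact le_sup_of_le_right (le_iSup₂_of_le β hβ le_rfl)
    · rw [Set.mem_singleton_iff] at hK; rw [hK]; exact bot_le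

theorem Zs_normal (α : Ordinal.{u}) : (Zs G α).Normal := by
  induction α using Ordinal.induction with
  | h α IH =>
    rw [Zs_eq]
    apply normal_sSup
    rintro K hK
    rcases hK with ⟨β, hβ, rfl⟩ | hbot
    · exact stepF_normal (IH β hβ)
    · rw [Set.mem_singleton_iff] at hbot
      rw [hbot]
      infer_instance

theorem Zs_monotone : Monotone (Zs G) := lfpApprox_mono_right stepF

theorem Zs_zero : Zs G 0 = ⊥ := by
  rw [Zs_eq]
  apply le_antisymm _ bot_le
  apply sSup_le
  rintro K hK
  rcases hK with ⟨β, hβ, rfl⟩ | hbot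
  · exact absurd hβ (by simp)
  · rw [Set.mem_singleton_iff] at hbot
    rw [hbot]

theorem mem_Zs_iff {α : Ordinal.{u}} (hα : α ≠ 0) {g : G} :
    g ∈ Zs G α ↔ ∃ β < α, g ∈ stepF (Zs G β) := by
  have hZ : Zs G α = sSup ({K | ∃ β, ∃ _ : β < α, stepF (Zs G β) = K} ∪ {⊥}) := by
    rw [Zs_eq]
  have hne : ({K | ∃ β, ∃ _ : β < α, stepF (Zs G β) = K} ∪ {⊥} : Set (Subgroup G)).Nonempty :=
    ⟨⊥, Or.inr rfl⟩
  have hdir : DirectedOn (· ≤ ·)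
      ({K | ∃ β, ∃ _ : β < α, stepF (Zs G β) = K} ∪ {⊥} : Set (Subgroup G)) := by
    rintro K (⟨β, hβ, rfl⟩ | hK) L (⟨γ, hγ, rfl⟩ | hL)
    · refine ⟨stepF (Zs G (max β γ)), Or.inl ⟨max β γ, max_lt hβ hγ, rfl⟩, ?_, ?_⟩
      · exact stepF.monotone (Zs_monotone (le_max_left _ _))
      · exact stepF.monotone (Zs_monotone (le_max_right _ _))
    · rw [Set.mem_singleton_iff] at hL; subst hL
      exact ⟨stepF (Zs G β), Or.inl ⟨β, hβ, rfl⟩, le_refl _, bot_le⟩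
    · rw [Set.mem_singleton_iff] at hK; subst hK
      exact ⟨stepF (Zs G γ), Or.inl ⟨γ, hγ, rfl⟩, bot_le, le_refl _⟩
    · rw [Set.mem_singleton_iff] at hK; subst hK
      exact ⟨⊥, Or.inr rfl, le_refl _, hL.le⟩
  rw [hZ, Subgroup.mem_sSup_of_directedOn hne hdir]
  constructor
  · rintro ⟨K, (⟨β, hβ, rfl⟩ | hK), hg⟩
    · exact ⟨β, hβ, hg⟩
    · rw [Set.mem_singleton_iff] at hK; subst hK
      refine ⟨0, pos_iff_ne_zero.mpr hα, ?_⟩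
      rw [Subgroup.mem_bot] at hg
      rw [hg]
      exact (stepF (Zs G 0)).one_mem
  · rintro ⟨β, hβ, hg⟩
    exact ⟨stepF (Zs G β), Or.inl ⟨β, hβ, rfl⟩, hg⟩

/-- Key commutator lemma: if `X` generates `G` and `N` is the normal closure of the
commutators of `T` with `X`, then `⁅normalClosure T, ⊤⁆ ≤ N`. -/
theorem commutator_normalClosure_le {X : Set G} (hX : Subgroup.closure X = ⊤) (T : Set G) :
    ⁅Subgroup.normalClosure T, (⊤ : Subgroup G)⁆ ≤
      Subgroup.normalClosure ((fun p : G × G => ⁅p.1, p.2⁆) '' T ×ˢ X) := by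
  set N := Subgroup.normalClosure ((fun p : G × G => ⁅p.1, p.2⁆) '' T ×ˢ X) with hN
  haveI : N.Normal := Subgroup.normalClosure_normal
  set P : Subgroup G := (Subgroup.center (G ⧸ N)).comap (QuotientGroup.mk' N) with hP
  haveI : P.Normal := Subgroup.normal_comap _
  have hTP : T ⊆ ↑P := by
    intro s hs
    rw [SetLike.mem_coe, hP, Subgroup.mem_comap, Subgroup.mem_center_iff]
    intro q
    obtain ⟨y, rfl⟩ := QuotientGroup.mk'_surjective N q
    have hy : y ∈ Subgroup.closure X := by rw [hX]; trivial
    have hC : Subgroup.closure X ≤ (Subgroup.centralizer {((s : G) : G ⧸ N)}).comap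
        (QuotientGroup.mk' N) := by
      rw [Subgroup.closure_le]
      intro x hx
      rw [SetLike.mem_coe, Subgroup.mem_comap, Subgroup.mem_centralizer_iff]
      rintro z hz
      rw [Set.mem_singleton_iff] at hz; subst hz
      have hmemN : ⁅s, x⁆ ∈ N :=
        Subgroup.subset_normalClosure ⟨(s, x), Set.mk_mem_prod hs hx, rfl⟩
      have hcomm : ⁅((s : G) : G ⧸ N), ((x : G) : G ⧸ N)⁆ = 1 := by
        have e : ((⁅s, x⁆ : G) : G ⧸ N) = ⁅((s : G) : G ⧸ N), ((x : G) : G ⧸ N)⁆ :=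
          map_commutatorElement (QuotientGroup.mk' N) s x
        rw [← e]
        exact (QuotientGroup.eq_one_iff _).mpr hmemN
      exact commutatorElement_eq_one_iff_mul_comm.mp hcomm
    have hyC := hC hy
    rw [Subgroup.mem_comap, Subgroup.mem_centralizer_iff] at hyC
    exact (hyC _ rfl).symm
  have hncl : Subgroup.normalClosure T ≤ P := Subgroup.normalClosure_le_normal hTP
  rw [Subgroup.commutator_le]
  intro g hg x _
  have hgP := hncl hg
  rw [hP, Subgroup.mem_comap, Subgroup.mem_center_iff] at hgP
  refine (QuotientGroup.eq_one_iff _).mp ?_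
  have e : ((⁅g, x⁆ : G) : G ⧸ N) = ⁅((g : G) : G ⧸ N), ((x : G) : G ⧸ N)⁆ :=
    map_commutatorElement (QuotientGroup.mk' N) g x
  rw [e, commutatorElement_eq_one_iff_mul_comm]
  exact (hgP ((x : G) : G ⧸ N)).symm

end HypercentralAux

open HypercentralAux

/-- A finitely generated hypercentral group is nilpotent, where hypercentrality
is expressed by: every proper normal subgroup gives a quotient with nontrivial
center. -/
theorem isNilpotent_of_fg_of_hypercentral
    (G : Type*) [Group G] [Group.FG G]
    (h : ∀ (K : Subgroup G) [K.Normal], K ≠ ⊤ → Nontrivial (Subgroup.center (G ⧸ K))) :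
    Group.IsNilpotent G := by
  classical
  -- A generating finite set
  obtain ⟨X, hX, hXfin⟩ : ∃ X : Set G, Subgroup.closure X = ⊤ ∧ X.Finite := by
    obtain ⟨X, hX1, hX2⟩ := Group.fg_iff.mp ‹Group.FG G›
    exact ⟨X, hX1, hX2⟩
  -- The transfinite upper central series reaches ⊤
  have htop : ∃ c : Ordinal, Zs G c = ⊤ := by
    set c := Cardinal.ord (Order.succ (Cardinal.mk (Subgroup G))) with hc
    have hfix : Zs G c ∈ Function.fixedPoints (stepF (G := G)) :=
      lfpApprox_ord_mem_fixedPoint stepF bot_le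
    rw [Function.mem_fixedPoints_iff] at hfix
    refine ⟨c, ?_⟩
    by_contra hne
    haveI hZn : (Zs G c).Normal := Zs_normal c
    haveI := h (Zs G c) hne
    obtain ⟨z, hz⟩ := exists_ne (1 : Subgroup.center (G ⧸ Zs G c))
    obtain ⟨g, hg⟩ := QuotientGroup.mk_surjective (z : G ⧸ Zs G c)
    have hgstep : g ∈ stepF (Zs G c) := by
      rw [mem_stepF hZn]
      intro x
      refine (QuotientGroup.eq_one_iff _).mp ?_
      have e : ((⁅g, x⁆ : G) : G ⧸ Zs G c) = ⁅((g : G) : G ⧸ Zs G c), ((x : G) : G ⧸ Zs G c)⁆ :=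
        map_commutatorElement (QuotientGroup.mk' (Zs G c)) g x
      rw [e, hg, commutatorElement_eq_one_iff_mul_comm]
      exact ((Subgroup.mem_center_iff.mp z.2) ((x : G) : G ⧸ Zs G c)).symm
    have hgnot : g ∉ Zs G c := by
      intro hgin
      apply hz
      have hz1 : (z : G ⧸ Zs G c) = 1 := by
        rw [← hg]
        exact (QuotientGroup.eq_one_iff _).mpr hgin
      exact Subtype.ext hz1
    rw [hfix] at hgstep
    exact hgnot hgstep
  obtain ⟨c, hctop⟩ := htop
  -- The sequence of normal generating sets of the lower central series
  set S : ℕ → Set G := fun k => Nat.rec X (fun _ T => (fun p : G × G => ⁅p.1, p.2⁆) '' T ×ˢ X) k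
    with hS
  have hS0 : S 0 = X := rfl
  have hSsucc : ∀ k, S (k + 1) = (fun p : G × G => ⁅p.1, p.2⁆) '' (S k) ×ˢ X := fun k => rfl
  have hSfin : ∀ k, (S k).Finite := by
    intro k
    induction k with
    | zero => exact hXfin
    | succ k IH => rw [hSsucc]; exact (IH.prod hXfin).image _
  -- The lower central series is below the normal closures of the `S k`
  have hlcs : ∀ k, Subgroup.lowerCentralSeries (⊤ : Subgroup G) k ≤ Subgroup.normalClosure (S k) := by
    intro k
    induction k with
    | zero =>
      rw [hS0]
      calc Subgroup.lowerCentralSeries (⊤ : Subgroup G) 0 = ⊤ := rfl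
        _ = Subgroup.closure X := hX.symm
        _ ≤ Subgroup.normalClosure X := Subgroup.closure_le_normalClosure
    | succ k IH =>
      have h1 : Subgroup.lowerCentralSeries (⊤ : Subgroup G) (k + 1) = ⁅Subgroup.lowerCentralSeries (⊤ : Subgroup G) k, (⊤ : Subgroup G)⁆ := rfl
      rw [h1, hSsucc]
      calc ⁅Subgroup.lowerCentralSeries (⊤ : Subgroup G) k, (⊤ : Subgroup G)⁆
          ≤ ⁅Subgroup.normalClosure (S k), (⊤ : Subgroup G)⁆ :=
            Subgroup.commutator_mono IH (le_refl _)
        _ ≤ Subgroup.normalClosure ((fun p : G × G => ⁅p.1, p.2⁆) '' (S k) ×ˢ X) :=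
            commutator_normalClosure_le hX (S k)
  -- common bound lemma for finite sets
  have hcommon : ∀ (α : Ordinal) (_ : α ≠ 0) (T : Set G) (_ : T.Finite)
      (_ : ∀ s ∈ T, ∃ β < α, s ∈ stepF (Zs G β)),
      ∃ β < α, ∀ s ∈ T, s ∈ stepF (Zs G β) := by
    intro α hα T hTfin
    refine Set.Finite.induction_on (motive := fun T _ => (∀ s ∈ T, ∃ β < α, s ∈ stepF (Zs G β)) →
      ∃ β < α, ∀ s ∈ T, s ∈ stepF (Zs G β)) T hTfin ?_ ?_
    · intro _
      exact ⟨0, pos_iff_ne_zero.mpr hα, fun s hs => absurd hs (Set.notMem_empty s)⟩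
    · intro a T' _ _ IH hmem
      obtain ⟨β₁, hβ₁, ha⟩ := hmem a (Set.mem_insert a T')
      obtain ⟨β₂, hβ₂, hT'⟩ := IH (fun s hs => hmem s (Set.mem_insert_of_mem a hs))
      refine ⟨max β₁ β₂, max_lt hβ₁ hβ₂, ?_⟩
      rintro s (rfl | hs)
      · exact stepF.monotone (Zs_monotone (le_max_left _ _)) ha
      · exact stepF.monotone (Zs_monotone (le_max_right _ _)) (hT' s hs)
  -- Main descent: if `S k ⊆ Zs G α` then the lower central series reaches ⊥
  have main : ∀ α : Ordinal, ∀ k : ℕ, S k ⊆ (Zs G α : Set G) →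
      ∃ m, Subgroup.lowerCentralSeries (⊤ : Subgroup G) m = ⊥ := by
    intro α
    induction α using Ordinal.induction with
    | h α IH =>
      intro k hsub
      by_cases hα : α = 0
      · subst hα
        rw [Zs_zero] at hsub
        refine ⟨k, le_antisymm ?_ bot_le⟩
        refine le_trans (hlcs k) (Subgroup.normalClosure_le_normal ?_)
        exact hsub
      · have hmem : ∀ s ∈ S k, ∃ β < α, s ∈ stepF (Zs G β) := by
          intro s hs
          exact (mem_Zs_iff hα).mp (hsub hs)
        obtain ⟨β, hβ, hall⟩ := hcommon α hα (S k) (hSfin k) hmem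
        have hnext : S (k + 1) ⊆ (Zs G β : Set G) := by
          rw [hSsucc]
          rintro _ ⟨⟨s, x⟩, ⟨hs, _⟩, rfl⟩
          have := hall s hs
          rw [mem_stepF (Zs_normal β)] at this
          exact this x
        exact IH β hβ (k + 1) hnext
  have hstart : S 0 ⊆ (Zs G c : Set G) := by
    rw [hctop]
    intro s _
    trivial
  obtain ⟨m, hm⟩ := main c 0 hstart
  exact Subgroup.nilpotent_iff_lowerCentralSeries.mpr ⟨m, hm⟩
end

section
/- Let $G$ be a group and $H$ a normal subgroup of finite index in $G$ such that for every normal subgroup $K$ of $H$ with $K \neq H$, the center of the quotient group $H/K$ is nontrivial (i.e. $H$ is hypercentral). Then every finitely generated subgroup $F$ of $G$ is nilpotent-by-finite: $F$ contains a nilpotent normal subgroup of finite index. -/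
open Subgroup
open scoped commutatorElement
universe u

section CStep
variable {Γ : Type*} [Group Γ]

/-- One step of the transfinite upper central series: elements central modulo `K`. -/
noncomputable def cstep (K : Subgroup Γ) : Subgroup Γ :=
  letI := Classical.propDecidable K.Normal
  if h : K.Normal then
    { carrier := { x : Γ | ∀ g : Γ, x * g * x⁻¹ * g⁻¹ ∈ K }
      one_mem' := by intro g; simpa using K.one_mem
      mul_mem' := by
        intro a b ha hb g
        have h1 : a * (b * g * b⁻¹ * g⁻¹) * a⁻¹ ∈ K := h.conj_mem _ (hb g) a
        have h2 : a * g * a⁻¹ * g⁻¹ ∈ K := ha g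
        have : (a * (b * g * b⁻¹ * g⁻¹) * a⁻¹) * (a * g * a⁻¹ * g⁻¹) =
            a * b * g * (a * b)⁻¹ * g⁻¹ := by group
        simpa [this] using K.mul_mem h1 h2
      inv_mem' := by
        intro a ha g
        have h1 : (a * g * a⁻¹ * g⁻¹)⁻¹ ∈ K := K.inv_mem (ha g)
        have h2 : a⁻¹ * ((a * g * a⁻¹ * g⁻¹)⁻¹) * a ∈ K := by
          simpa using h.conj_mem _ h1 a⁻¹
        have : a⁻¹ * ((a * g * a⁻¹ * g⁻¹)⁻¹) * a = a⁻¹ * g * (a⁻¹)⁻¹ * g⁻¹ := by group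
        rwa [this] at h2 }
  else K

theorem mem_cstep {K : Subgroup Γ} (h : K.Normal) {x : Γ} :
    x ∈ cstep K ↔ ∀ g : Γ, x * g * x⁻¹ * g⁻¹ ∈ K := by
  rw [cstep]
  rw [dif_pos h]
  rfl

theorem le_cstep (K : Subgroup Γ) : K ≤ cstep K := by
  by_cases h : K.Normal
  · intro x hx
    rw [mem_cstep h]
    intro g
    have h1 : g * x⁻¹ * g⁻¹ ∈ K := h.conj_mem _ (K.inv_mem hx) g
    have : x * (g * x⁻¹ * g⁻¹) = x * g * x⁻¹ * g⁻¹ := by group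
    rw [← this]
    exact K.mul_mem hx h1
  · rw [cstep]; rw [dif_neg h]

theorem cstep_normal {K : Subgroup Γ} (h : K.Normal) : (cstep K).Normal := by
  constructor
  intro x hx g
  rw [mem_cstep h] at hx ⊢
  intro y
  have h1 := hx (g⁻¹ * y * g)
  have h2 := h.conj_mem _ h1 g
  have : g * (x * (g⁻¹ * y * g) * x⁻¹ * (g⁻¹ * y * g)⁻¹) * g⁻¹ =
      g * x * g⁻¹ * y * (g * x * g⁻¹)⁻¹ * y⁻¹ := by group
  rwa [this] at h2

theorem cstep_mono {K K' : Subgroup Γ} (h : K.Normal) (h' : K'.Normal) (hle : K ≤ K') :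
    cstep K ≤ cstep K' := by
  intro x hx
  rw [mem_cstep h] at hx
  rw [mem_cstep h']
  exact fun g => hle (hx g)

theorem cstep_exists_of_nontrivial {K : Subgroup Γ} (h : K.Normal)
    (hnt : Nontrivial (Subgroup.center (Γ ⧸ K))) :
    ∃ x : Γ, x ∈ cstep K ∧ x ∉ K := by
  obtain ⟨z, hz⟩ := exists_ne (1 : Subgroup.center (Γ ⧸ K))
  obtain ⟨x, hx⟩ := QuotientGroup.mk'_surjective K z.1
  refine ⟨x, ?_, ?_⟩
  · rw [mem_cstep h]
    intro g
    have hc : ((x : Γ ⧸ K) : Γ ⧸ K) * (g : Γ ⧸ K) = (g : Γ ⧸ K) * (x : Γ ⧸ K) := by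
      have := Subgroup.mem_center_iff.mp z.2 (QuotientGroup.mk g)
      rw [← hx] at this
      exact this.symm
    have : ((x * g * x⁻¹ * g⁻¹ : Γ) : Γ ⧸ K) = 1 := by
      rw [QuotientGroup.mk_mul, QuotientGroup.mk_mul, QuotientGroup.mk_mul,
        QuotientGroup.mk_inv, QuotientGroup.mk_inv, hc]
      group
    rwa [QuotientGroup.eq_one_iff] at this
  · intro hxK
    apply hz
    apply Subtype.ext
    have : z.1 = 1 := by rw [← hx]; exact (QuotientGroup.eq_one_iff x).mpr hxK
    simpa using this

end CStep

section Zch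
variable {Γ : Type u} [Group Γ]

/-- The transfinite upper central series. -/
noncomputable def Zch : Ordinal.{u} → Subgroup Γ :=
  fun o => ⨆ p : { p : Ordinal.{u} // p < o }, cstep (Zch p.1)
termination_by o => o
decreasing_by exact p.2

theorem Zch_def (o : Ordinal.{u}) :
    (Zch o : Subgroup Γ) = ⨆ p : { p : Ordinal.{u} // p < o }, cstep (Zch p.1) := by
  rw [Zch]

theorem normal_iSup {ι : Sort*} (f : ι → Subgroup Γ) (h : ∀ i, (f i).Normal) :
    (⨆ i, f i).Normal := by
  constructor
  intro n hn g
  refine Subgroup.iSup_induction f (C := fun x => g * x * g⁻¹ ∈ ⨆ i, f i) hn ?_ ?_ ?_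
  · intro i x hx
    exact le_iSup f i ((h i).conj_mem x hx g)
  · simpa using Subgroup.one_mem _
  · intro x y hx hy
    have : g * (x * y) * g⁻¹ = (g * x * g⁻¹) * (g * y * g⁻¹) := by group
    rw [this]
    exact Subgroup.mul_mem _ hx hy

theorem Zch_normal (o : Ordinal.{u}) : (Zch (Γ := Γ) o).Normal := by
  induction o using Ordinal.induction with
  | _ o ih =>
    rw [Zch_def]
    exact normal_iSup _ fun p => cstep_normal (ih p.1 p.2)

theorem Zch_mono : Monotone (Zch (Γ := Γ)) := by
  intro o o' h
  rw [Zch_def, Zch_def]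
  exact iSup_le fun p => le_iSup (fun q : {p // p < o'} => cstep (Zch q.1)) ⟨p.1, lt_of_lt_of_le p.2 h⟩

theorem Zch_zero : (Zch 0 : Subgroup Γ) = ⊥ := by
  rw [Zch_def]
  haveI : IsEmpty { p : Ordinal.{u} // p < 0 } := ⟨fun p => not_lt_zero p.2⟩
  exact iSup_of_empty _

theorem Zch_succ (o : Ordinal.{u}) : (Zch (o + 1) : Subgroup Γ) = cstep (Zch o) := by
  apply le_antisymm
  · rw [Zch_def]
    refine iSup_le fun p => ?_
    obtain ⟨p, hp⟩ := p
    have hle : p ≤ o := by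
      rw [Ordinal.add_one_eq_succ] at hp
      exact Order.lt_succ_iff.mp hp
    exact cstep_mono (Zch_normal _) (Zch_normal _) (Zch_mono hle)
  · rw [Zch_def (o + 1)]
    exact le_iSup (fun q : {p // p < o + 1} => cstep (Zch q.1)) ⟨o, by
      rw [Ordinal.add_one_eq_succ]; exact Order.lt_succ o⟩

theorem Zch_limit_mem {o : Ordinal.{u}} (ho : o ≠ 0) {x : Γ} (hx : x ∈ Zch o) :
    ∃ p < o, x ∈ cstep (Zch (Γ := Γ) p) := by
  haveI : Nonempty { p : Ordinal.{u} // p < o } := ⟨⟨0, pos_iff_ne_zero.mpr ho⟩⟩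
  rw [Zch_def] at hx
  have hdir : Directed (· ≤ ·) fun p : { p : Ordinal.{u} // p < o } => cstep (Zch (Γ := Γ) p.1) := by
    intro p q
    rcases le_total p.1 q.1 with h | h
    · exact ⟨q, cstep_mono (Zch_normal _) (Zch_normal _) (Zch_mono h), le_rfl⟩
    · exact ⟨p, le_rfl, cstep_mono (Zch_normal _) (Zch_normal _) (Zch_mono h)⟩
  obtain ⟨p, hp⟩ := (Subgroup.mem_iSup_of_directed hdir).mp hx
  exact ⟨p.1, p.2, hp⟩

theorem exists_Zch_top
    (hhyp : ∀ (K : Subgroup Γ) [K.Normal], K ≠ ⊤ → Nontrivial (Subgroup.center (Γ ⧸ K))) :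
    ∃ o : Ordinal.{u}, (Zch o : Subgroup Γ) = ⊤ := by
  by_contra hcon
  push_neg at hcon
  have hstrict : StrictMono (Zch (Γ := Γ)) := by
    intro o o' h
    haveI := Zch_normal (Γ := Γ) o
    obtain ⟨x, hx1, hx2⟩ := cstep_exists_of_nontrivial (Zch_normal o) (hhyp _ (hcon o))
    refine lt_of_lt_of_le ?_ (Zch_mono (Order.add_one_le_of_lt h))
    rw [Zch_succ]
    exact lt_of_le_of_ne (le_cstep _) (fun he => (he ▸ hx2) hx1)
  exact not_injective_of_ordinal (Zch (Γ := Γ)) hstrict.injective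

end Zch

section Mu
variable {Γ : Type u} [Group Γ]

/-- The height of an element: least ordinal stage containing it. -/
noncomputable def mu (w : Γ) : Ordinal.{u} := sInf { o : Ordinal.{u} | w ∈ Zch o }

theorem mu_commutator_lt (htop : ∃ o : Ordinal.{u}, (Zch o : Subgroup Γ) = ⊤)
    {w : Γ} (hw : w ≠ 1) (g : Γ) : mu (w * g * w⁻¹ * g⁻¹) < mu w := by
  obtain ⟨o, ho⟩ := htop
  have hne : { o : Ordinal.{u} | w ∈ Zch o }.Nonempty := ⟨o, by rw [Set.mem_setOf_eq, ho]; trivial⟩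
  have hmem : w ∈ Zch (Γ := Γ) (mu w) := csInf_mem hne
  have hmu0 : mu w ≠ 0 := by
    intro h0
    rw [h0, Zch_zero] at hmem
    exact hw hmem
  obtain ⟨p, hp, hcp⟩ := Zch_limit_mem hmu0 hmem
  have hcomm : w * g * w⁻¹ * g⁻¹ ∈ Zch (Γ := Γ) p := (mem_cstep (Zch_normal p)).mp hcp g
  calc mu (w * g * w⁻¹ * g⁻¹) ≤ p := csInf_le' hcomm
    _ < mu w := hp

/-- Depth of an element: length of iterated commutators with elements of `X`. -/
noncomputable def dd (htop : ∃ o : Ordinal.{u}, (Zch o : Subgroup Γ) = ⊤) (X : Finset Γ)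
    (w : Γ) : ℕ :=
  letI := Classical.propDecidable (w = 1)
  if h : w = 1 then 0
  else 1 + X.sup fun x => dd htop X (w * x * w⁻¹ * x⁻¹)
termination_by mu w
decreasing_by exact mu_commutator_lt htop h x

variable (htop : ∃ o : Ordinal.{u}, (Zch o : Subgroup Γ) = ⊤) (X : Finset Γ)

theorem dd_one : dd htop X 1 = 0 := by
  rw [dd]
  simp

theorem dd_pos {w : Γ} (hw : w ≠ 1) : dd htop X w = 1 + X.sup fun x => dd htop X (w * x * w⁻¹ * x⁻¹) := by
  rw [dd]
  simp [hw]

theorem dd_eq_zero {w : Γ} (h : dd htop X w = 0) : w = 1 := by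
  by_contra hw
  rw [dd_pos htop X hw] at h
  omega

theorem dd_commutator_lt {w : Γ} (hw : w ≠ 1) {x : Γ} (hx : x ∈ X) :
    dd htop X (w * x * w⁻¹ * x⁻¹) < dd htop X w := by
  rw [dd_pos htop X hw]
  have h1 : dd htop X (w * x * w⁻¹ * x⁻¹) ≤ X.sup fun x => dd htop X (w * x * w⁻¹ * x⁻¹) :=
    Finset.le_sup (f := fun x => dd htop X (w * x * w⁻¹ * x⁻¹)) hx
  omega

end Mu

section Nilp
variable {Γ : Type u} [Group Γ]
variable (htop : ∃ o : Ordinal.{u}, (Zch o : Subgroup Γ) = ⊤) (X : Finset Γ)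

/-- The pieces of the central series of the subgroup generated by `X`. -/
noncomputable def LL (j : ℕ) : Subgroup Γ :=
  Subgroup.closure { w : Γ | w ∈ Subgroup.closure (X : Set Γ) ∧ dd htop X w ≤ j }

theorem LL_le (j : ℕ) : LL htop X j ≤ Subgroup.closure (X : Set Γ) :=
  (Subgroup.closure_le _).mpr fun _ hw => hw.1

theorem le_LL : Subgroup.closure (X : Set Γ) ≤ LL htop X (X.sup (dd htop X)) := by
  apply Subgroup.closure_le _ |>.mpr
  intro x hx
  exact Subgroup.subset_closure ⟨Subgroup.subset_closure hx, Finset.le_sup hx⟩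

theorem LL_zero : LL htop X 0 = ⊥ := by
  rw [eq_bot_iff]
  apply Subgroup.closure_le _ |>.mpr
  intro w hw
  have : w = 1 := dd_eq_zero htop X (Nat.le_zero.mp hw.2)
  simp [this, Subgroup.one_mem]

theorem conj_mem_LL {j : ℕ} {x : Γ} (hx : x ∈ X) {g : Γ} (hg : g ∈ LL htop X j) :
    x * g * x⁻¹ ∈ LL htop X j := by
  induction hg using Subgroup.closure_induction with
  | mem w hw =>
    by_cases hw1 : w = 1
    · simp [hw1, Subgroup.one_mem]
    · have hxS : x ∈ Subgroup.closure (X : Set Γ) := Subgroup.subset_closure hx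
      have hc : w * x * w⁻¹ * x⁻¹ ∈
          { w : Γ | w ∈ Subgroup.closure (X : Set Γ) ∧ dd htop X w ≤ j } := by
        constructor
        · exact Subgroup.mul_mem _ (Subgroup.mul_mem _ (Subgroup.mul_mem _ hw.1 hxS)
            (Subgroup.inv_mem _ hw.1)) (Subgroup.inv_mem _ hxS)
        · exact le_trans (Nat.le_of_lt (dd_commutator_lt htop X hw1 hx)) hw.2
      have heq : x * w * x⁻¹ = (w * x * w⁻¹ * x⁻¹)⁻¹ * w := by group
      rw [heq]
      exact Subgroup.mul_mem _ (Subgroup.inv_mem _ (Subgroup.subset_closure hc))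
        (Subgroup.subset_closure hw)
  | one => simpa using Subgroup.one_mem _
  | mul a b _ _ ha hb =>
    have : x * (a * b) * x⁻¹ = (x * a * x⁻¹) * (x * b * x⁻¹) := by group
    rw [this]
    exact Subgroup.mul_mem _ ha hb
  | inv a _ ha =>
    have : x * a⁻¹ * x⁻¹ = (x * a * x⁻¹)⁻¹ := by group
    rw [this]
    exact Subgroup.inv_mem _ ha

theorem closure_le_normalizer_LL (hX : ∀ x ∈ X, x⁻¹ ∈ X) (j : ℕ) :
    Subgroup.closure (X : Set Γ) ≤ Subgroup.normalizer (LL htop X j : Set Γ) := by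
  apply Subgroup.closure_le _ |>.mpr
  intro x hx
  rw [SetLike.mem_coe, Subgroup.mem_normalizer_iff]
  intro h
  constructor
  · exact fun hh => conj_mem_LL htop X hx hh
  · intro hh
    have := conj_mem_LL htop X (hX x hx) hh
    have heq : x⁻¹ * (x * h * x⁻¹) * x⁻¹⁻¹ = h := by group
    rwa [heq] at this

theorem conj_mem_LL' (hX : ∀ x ∈ X, x⁻¹ ∈ X) {j : ℕ} {s : Γ}
    (hs : s ∈ Subgroup.closure (X : Set Γ)) {g : Γ} (hg : g ∈ LL htop X j) :
    s * g * s⁻¹ ∈ LL htop X j :=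
  (Subgroup.mem_normalizer_iff.mp (closure_le_normalizer_LL htop X hX j hs) g).mp hg

theorem key_commutator (hX : ∀ x ∈ X, x⁻¹ ∈ X) (j : ℕ) :
    ∀ a ∈ LL htop X (j + 1), ∀ b ∈ Subgroup.closure (X : Set Γ), ⁅a, b⁆ ∈ LL htop X j := by
  have gen : ∀ w ∈ { w : Γ | w ∈ Subgroup.closure (X : Set Γ) ∧ dd htop X w ≤ j + 1 },
      ∀ b ∈ Subgroup.closure (X : Set Γ), ⁅w, b⁆ ∈ LL htop X j := by
    intro w hw b hb
    induction hb using Subgroup.closure_induction with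
    | mem x hx =>
      by_cases hw1 : w = 1
      · simp [hw1, Subgroup.one_mem]
      · have : ⁅w, x⁆ = w * x * w⁻¹ * x⁻¹ := by rw [commutatorElement_def]
        rw [this]
        apply Subgroup.subset_closure
        constructor
        · exact Subgroup.mul_mem _ (Subgroup.mul_mem _ (Subgroup.mul_mem _ hw.1
            (Subgroup.subset_closure hx)) (Subgroup.inv_mem _ hw.1))
            (Subgroup.inv_mem _ (Subgroup.subset_closure hx))
        · have h1 := dd_commutator_lt htop X hw1 hx
          have h2 := hw.2
          omega
    | one => simpa using Subgroup.one_mem _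
    | mul b c hbS hcS hb hc =>
      have heq : ⁅w, b * c⁆ = ⁅w, b⁆ * (b * ⁅w, c⁆ * b⁻¹) := by
        simp only [commutatorElement_def]; group
      rw [heq]
      exact Subgroup.mul_mem _ hb (conj_mem_LL' htop X hX hbS hc)
    | inv b hbS hb =>
      have heq : ⁅w, b⁻¹⁆ = b⁻¹ * ⁅w, b⁆⁻¹ * b := by
        simp only [commutatorElement_def]; group
      rw [heq]
      have := conj_mem_LL' htop X hX (Subgroup.inv_mem _ hbS) (Subgroup.inv_mem _ hb)
      simpa using this
  intro a ha
  induction ha using Subgroup.closure_induction with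
  | mem w hw => exact gen w hw
  | one => intro b hb; simpa using Subgroup.one_mem _
  | mul a c haL hcL ha hc =>
    intro b hb
    have heq : ⁅a * c, b⁆ = (a * ⁅c, b⁆ * a⁻¹) * ⁅a, b⁆ := by
      simp only [commutatorElement_def]; group
    rw [heq]
    exact Subgroup.mul_mem _ (conj_mem_LL' htop X hX (LL_le htop X (j+1) haL) (hc b hb))
      (ha b hb)
  | inv a haL ha =>
    intro b hb
    have heq : ⁅a⁻¹, b⁆ = a⁻¹ * ⁅a, b⁆⁻¹ * a := by
      simp only [commutatorElement_def]; group
    rw [heq]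
    have := conj_mem_LL' htop X hX (Subgroup.inv_mem _ (LL_le htop X (j+1) haL))
      (Subgroup.inv_mem _ (ha b hb))
    simpa using this

include htop in
theorem nilpotent_closure_of_symm (hX : ∀ x ∈ X, x⁻¹ ∈ X) :
    Group.IsNilpotent (Subgroup.closure (X : Set Γ)) := by
  set S : Subgroup Γ := Subgroup.closure (X : Set Γ) with hS
  set m : ℕ := X.sup (dd htop X) with hm
  have hmap : ∀ k : ℕ, Subgroup.map S.subtype ((⊤ : Subgroup ↥S).lowerCentralSeries k) ≤ LL htop X (m - k) := by
    intro k
    induction k with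
    | zero =>
      rw [Subgroup.lowerCentralSeries_zero, ← MonoidHom.range_eq_map, Subgroup.range_subtype]
      exact le_LL htop X
    | succ k ih =>
      have hsucc : (⊤ : Subgroup ↥S).lowerCentralSeries (k + 1) = ⁅(⊤ : Subgroup ↥S).lowerCentralSeries k, (⊤ : Subgroup ↥S)⁆ :=
        rfl
      rw [hsucc]
      have h1 : Subgroup.map S.subtype ⁅(⊤ : Subgroup ↥S).lowerCentralSeries k, (⊤ : Subgroup ↥S)⁆ =
          ⁅Subgroup.map S.subtype ((⊤ : Subgroup ↥S).lowerCentralSeries k), Subgroup.map S.subtype ⊤⁆ :=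
        Subgroup.map_commutator _ _ _
      rw [h1]
      have h2 : Subgroup.map S.subtype ⊤ = S := by
        rw [← MonoidHom.range_eq_map, Subgroup.range_subtype]
      rw [h2]
      rcases Nat.eq_zero_or_pos (m - k) with h0 | hpos
      · have h0' : m - (k + 1) = 0 := by omega
        rw [h0']
        rw [h0, LL_zero] at ih
        calc ⁅Subgroup.map S.subtype ((⊤ : Subgroup ↥S).lowerCentralSeries k), S⁆ ≤ ⁅(⊥ : Subgroup Γ), S⁆ :=
              Subgroup.commutator_mono ih le_rfl
          _ ≤ LL htop X 0 := by
              rw [LL_zero]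
              apply Subgroup.commutator_le.mpr
              intro g hg r _
              simp only [Subgroup.mem_bot] at hg
              simp [hg]
      · obtain ⟨j, hj⟩ : ∃ j, m - k = j + 1 := ⟨m - k - 1, by omega⟩
        have hj' : m - (k + 1) = j := by omega
        rw [hj']
        calc ⁅Subgroup.map S.subtype ((⊤ : Subgroup ↥S).lowerCentralSeries k), S⁆
            ≤ ⁅LL htop X (j + 1), S⁆ := Subgroup.commutator_mono (hj ▸ ih) le_rfl
          _ ≤ LL htop X j := Subgroup.commutator_le.mpr
              (fun a ha b hb => key_commutator htop X hX j a ha b hb)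
  rw [Subgroup.nilpotent_iff_lowerCentralSeries]
  refine ⟨m, ?_⟩
  have := hmap m
  rw [Nat.sub_self, LL_zero, le_bot_iff] at this
  exact (Subgroup.map_eq_bot_iff_of_injective _ (Subgroup.subtype_injective S)).mp this

end Nilp

theorem fg_subgroup_nilpotent {Γ : Type u} [Group Γ]
    (hhyp : ∀ (K : Subgroup Γ) [K.Normal], K ≠ ⊤ → Nontrivial (Subgroup.center (Γ ⧸ K)))
    (S : Subgroup Γ) (hS : S.FG) : Group.IsNilpotent S := by
  obtain ⟨X₀, hX₀⟩ := hS
  classical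
  set X : Finset Γ := X₀ ∪ X₀.image (·⁻¹) with hXdef
  have hX : ∀ x ∈ X, x⁻¹ ∈ X := by
    intro x hx
    rw [hXdef, Finset.mem_union] at hx ⊢
    rcases hx with hx | hx
    · exact Or.inr (Finset.mem_image_of_mem _ hx)
    · obtain ⟨y, hy, rfl⟩ := Finset.mem_image.mp hx
      exact Or.inl (by simpa using hy)
  have hclos : Subgroup.closure (X : Set Γ) = S := by
    rw [hXdef, Finset.coe_union, Finset.coe_image, Subgroup.closure_union,
      Set.image_inv_eq_inv, Subgroup.closure_inv, sup_idem, hX₀]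
  have htop := exists_Zch_top hhyp
  have hnil := nilpotent_closure_of_symm htop X hX
  rwa [hclos] at hnil

/-- In a hypercentral-by-finite group, every finitely generated subgroup is
nilpotent-by-finite. -/
theorem fg_subgroup_nilpotent_by_finite_of_hypercentral_by_finite
    (G : Type*) [Group G] (H : Subgroup G) [H.Normal] [H.FiniteIndex]
    (hhyp : ∀ (K : Subgroup H) [K.Normal], K ≠ ⊤ → Nontrivial (Subgroup.center (H ⧸ K)))
    (F : Subgroup G) [Group.FG F] :
    ∃ N : Subgroup F, N.Normal ∧ N.FiniteIndex ∧ Group.IsNilpotent N := by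
  refine ⟨H.subgroupOf F, inferInstance, ?_, ?_⟩
  · constructor
    intro h0
    have hdvd : H.relIndex F ∣ H.index := Subgroup.relIndex_dvd_index_of_normal H F
    have : (H.subgroupOf F).index = H.relIndex F := rfl
    rw [this, ] at h0
    rw [h0] at hdvd
    exact Subgroup.FiniteIndex.index_ne_zero (zero_dvd_iff.mp hdvd)
  · -- nilpotency
    haveI : (H.subgroupOf F).FiniteIndex := by
      constructor
      intro h0
      have hdvd : H.relIndex F ∣ H.index := Subgroup.relIndex_dvd_index_of_normal H F
      rw [show (H.subgroupOf F).index = H.relIndex F from rfl] at h0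
      rw [h0] at hdvd
      exact Subgroup.FiniteIndex.index_ne_zero (zero_dvd_iff.mp hdvd)
    haveI hfgN : Group.FG (H.subgroupOf F) := Subgroup.fg_of_index_ne_zero _
    have hNJ : H.subgroupOf F = (F ⊓ H).subgroupOf F := by
      ext x
      simp only [Subgroup.mem_subgroupOf, Subgroup.mem_inf]
      exact ⟨fun h => ⟨x.2, h⟩, fun h => h.2⟩
    have e1 : ((F ⊓ H).subgroupOf F) ≃* (F ⊓ H : Subgroup G) :=
      Subgroup.subgroupOfEquivOfLe inf_le_left
    have e2 : ((F ⊓ H).subgroupOf H) ≃* (F ⊓ H : Subgroup G) :=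
      Subgroup.subgroupOfEquivOfLe inf_le_right
    haveI hfgJ : Group.FG (F ⊓ H : Subgroup G) := by
      rw [hNJ] at hfgN
      exact Group.fg_of_surjective (f := e1.toMonoidHom) e1.surjective
    haveI hfgSH : Group.FG ((F ⊓ H).subgroupOf H) :=
      Group.fg_of_surjective (f := e2.symm.toMonoidHom) e2.symm.surjective
    have hnilSH : Group.IsNilpotent ((F ⊓ H).subgroupOf H) :=
      fg_subgroup_nilpotent hhyp _ ((Group.fg_iff_subgroup_fg _).mp hfgSH)
    have hnilJ : Group.IsNilpotent (F ⊓ H : Subgroup G) := nilpotent_of_mulEquiv e2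
    have hnilN : Group.IsNilpotent ((F ⊓ H).subgroupOf F) := nilpotent_of_mulEquiv e1.symm
    rw [hNJ]
    exact hnilN
end

section
/- Let $F$ be a group and $t$ a natural number such that $\gamma_{t+1}(F)$ (that is, `lowerCentralSeries F t`) is finite. Then the lower central series of $F$ stabilizes at a finite term: there exists a natural number $m \geq t$ such that `lowerCentralSeries F (m+1) = lowerCentralSeries F m`, the subgroup $L =$ `lowerCentralSeries F m` is finite, and the quotient group $F/L$ is nilpotent. -/
theorem lcs_map_surj {F H : Type*} [Group F] [Group H] (f : F →* H)
    (hf : Function.Surjective f) (n : ℕ) :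
    ((⊤ : Subgroup F).lowerCentralSeries n).map f = (⊤ : Subgroup H).lowerCentralSeries n := by
  induction n with
  | zero => simpa using Subgroup.map_top_of_surjective f hf
  | succ n ih =>
      show ((⁅(⊤ : Subgroup F).lowerCentralSeries n, ⊤⁆ : Subgroup F)).map f = ⁅(⊤ : Subgroup H).lowerCentralSeries n, ⊤⁆
      rw [Subgroup.map_commutator, ih, Subgroup.map_top_of_surjective f hf]

/-- If `γ_{t+1}(F)` is finite, then the lower central series of `F` stabilizes
at a finite term `L = γ_{m+1}(F)` with `F ⧸ L` nilpotent. -/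
theorem lowerCentralSeries_stabilizes_of_finite
    (F : Type*) [Group F] (t : ℕ) (h : Finite ((⊤ : Subgroup F).lowerCentralSeries t)) :
    ∃ m : ℕ, t ≤ m ∧ (⊤ : Subgroup F).lowerCentralSeries (m + 1) = (⊤ : Subgroup F).lowerCentralSeries m ∧
      Finite ((⊤ : Subgroup F).lowerCentralSeries m) ∧
      Group.IsNilpotent (F ⧸ (⊤ : Subgroup F).lowerCentralSeries m) := by
  have hfin : ∀ n, t ≤ n → Finite ((⊤ : Subgroup F).lowerCentralSeries n) := fun n hn =>
    Finite.of_injective (Subgroup.inclusion ((⊤ : Subgroup F).lowerCentralSeries_antitone hn))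
      (Subgroup.inclusion_injective _)
  set c : ℕ → ℕ := fun n => Nat.card ((⊤ : Subgroup F).lowerCentralSeries (t + n)) with hc
  let k := Function.argmin c
  have hk : ∀ n, c k ≤ c n := fun n => Function.argmin_le c n
  refine ⟨t + k, Nat.le_add_right _ _, ?_, hfin _ (Nat.le_add_right _ _), ?_⟩
  · have hfk : Finite ((⊤ : Subgroup F).lowerCentralSeries (t + k)) := hfin _ (Nat.le_add_right _ _)
    refine Subgroup.eq_of_le_of_card_ge
      ((⊤ : Subgroup F).lowerCentralSeries_antitone (Nat.le_succ _)) ?_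
    have := hk (k + 1)
    simpa [hc, ← Nat.add_assoc] using this
  · rw [Subgroup.nilpotent_iff_lowerCentralSeries]
    refine ⟨t + k, ?_⟩
    rw [← lcs_map_surj (QuotientGroup.mk' ((⊤ : Subgroup F).lowerCentralSeries (t + k)))
        (QuotientGroup.mk'_surjective _)]
    rw [Subgroup.map_eq_bot_iff, QuotientGroup.ker_mk']
end

section
/- Let $G$ be a group such that every finitely generated subgroup of $G$ is nilpotent (i.e. $G$ is locally nilpotent), and suppose $G$ has a normal subgroup $H$ of finite index such that for every normal subgroup $K$ of $H$ with $K \neq H$, the center of $H/K$ is nontrivial (i.e. $H$ is hypercentral). Then $G$ itself is hypercentral: for every normal subgroup $N$ of $G$ with $N \neq G$, the center of the quotient group $G/N$ is nontrivial. -/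
open Subgroup QuotientGroup

/-- In a nilpotent group, every nontrivial normal subgroup contains a nontrivial
central element. -/
private lemma exists_mem_center_of_normal {F : Type*} [Group F] [Group.IsNilpotent F]
    (B : Subgroup F) [hBn : B.Normal] (hB : B ≠ ⊥) :
    ∃ w : F, w ∈ B ∧ w ∈ Subgroup.center F ∧ w ≠ 1 := by
  classical
  have hex : ∃ n, B ⊓ Subgroup.upperCentralSeries F n ≠ ⊥ :=
    ⟨Group.nilpotencyClass F, by rwa [Subgroup.upperCentralSeries_nilpotencyClass, inf_top_eq]⟩
  have hspec := Nat.find_spec hex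
  have hm0 : Nat.find hex ≠ 0 := by
    intro h
    rw [h] at hspec
    simp at hspec
  obtain ⟨k, hk⟩ := Nat.exists_eq_succ_of_ne_zero hm0
  rw [hk] at hspec
  have hkbot : B ⊓ Subgroup.upperCentralSeries F k = ⊥ := by
    have := Nat.find_min hex (by omega : k < Nat.find hex)
    simpa using this
  obtain ⟨a, ha1⟩ := Subgroup.ne_bot_iff_exists_ne_one.mp hspec
  have hxB := (Subgroup.mem_inf.mp a.2).1
  have hxU := (Subgroup.mem_inf.mp a.2).2
  refine ⟨a, hxB, ?_, fun h => ha1 (Subtype.ext h)⟩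
  rw [Subgroup.mem_center_iff]
  intro y
  have hcU : (a : F) * y * (a : F)⁻¹ * y⁻¹ ∈ Subgroup.upperCentralSeries F k :=
    Subgroup.mem_upperCentralSeries_succ_iff.mp hxU y
  have hcB : (a : F) * y * (a : F)⁻¹ * y⁻¹ ∈ B := by
    have h1 : y * (a : F)⁻¹ * y⁻¹ ∈ B := hBn.conj_mem _ (B.inv_mem hxB) y
    have h2 := B.mul_mem hxB h1
    convert h2 using 1
    group
  have hbot : (a : F) * y * (a : F)⁻¹ * y⁻¹ ∈ (⊥ : Subgroup F) :=
    hkbot ▸ Subgroup.mem_inf.mpr ⟨hcB, hcU⟩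
  rw [Subgroup.mem_bot, mul_inv_eq_one, mul_inv_eq_iff_eq_mul] at hbot
  exact hbot.symm

/-- A quotient of a locally nilpotent group is locally nilpotent. -/
private lemma locnil_quot {G : Type*} [Group G]
    (hloc : ∀ F : Subgroup G, Group.FG F → Group.IsNilpotent F)
    (N : Subgroup G) [N.Normal] :
    ∀ F : Subgroup (G ⧸ N), Group.FG F → Group.IsNilpotent F := by
  intro F hF
  obtain ⟨S, hScl, hSfin⟩ := (Subgroup.fg_iff F).mp ((Group.fg_iff_subgroup_fg F).mp hF)
  set T : Set G := (fun q : G ⧸ N => q.out) '' S with hT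
  have hTfin : T.Finite := hSfin.image _
  have hmap : (Subgroup.closure T).map (QuotientGroup.mk' N) = F := by
    rw [MonoidHom.map_closure, hT, Set.image_image]
    simp only [QuotientGroup.mk'_apply, QuotientGroup.out_eq']
    rw [Set.image_id', hScl]
  have hnil : Group.IsNilpotent (Subgroup.closure T) := by
    apply hloc
    haveI := hTfin.to_subtype
    infer_instance
  have h2 := nilpotent_of_surjective ((QuotientGroup.mk' N).subgroupMap (Subgroup.closure T))
      (MonoidHom.subgroupMap_surjective _ _)
  rwa [hmap] at h2

/-- A locally nilpotent, hypercentral-by-finite group is hypercentral. -/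
theorem hypercentral_of_locally_nilpotent_of_hypercentral_by_finite
    (G : Type*) [Group G]
    (hloc : ∀ F : Subgroup G, Group.FG F → Group.IsNilpotent F)
    (H : Subgroup G) [H.Normal] [H.FiniteIndex]
    (hhyp : ∀ (K : Subgroup H) [K.Normal], K ≠ ⊤ → Nontrivial (Subgroup.center (H ⧸ K))) :
    ∀ (N : Subgroup G) [N.Normal], N ≠ ⊤ → Nontrivial (Subgroup.center (G ⧸ N)) := by
  intro N _ hN
  have hQnil := locnil_quot hloc N
  by_cases hHN : H ≤ N
  · -- the quotient is finite, nilpotent and nontrivial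
    haveI : N.FiniteIndex := Subgroup.finiteIndex_of_le hHN
    haveI hfin : Finite (G ⧸ N) := Subgroup.finite_quotient_of_finiteIndex
    haveI hnt : Nontrivial (G ⧸ N) := by
      rw [← not_subsingleton_iff_nontrivial]
      exact fun h => hN (QuotientGroup.subgroup_eq_top_of_subsingleton N h)
    haveI : Group.IsNilpotent ((⊤ : Subgroup (G ⧸ N))) := hQnil ⊤ inferInstance
    haveI : Group.IsNilpotent (G ⧸ N) :=
      nilpotent_of_surjective (G := (⊤ : Subgroup (G ⧸ N)))
        (Subgroup.topEquiv (G := G ⧸ N)).toMonoidHom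
        (fun x => ⟨⟨x, Subgroup.mem_top x⟩, rfl⟩)
    have htb : (⊤ : Subgroup (G ⧸ N)) ≠ ⊥ := by
      obtain ⟨x, hx⟩ := exists_ne (1 : G ⧸ N)
      exact Subgroup.ne_bot_iff_exists_ne_one.mpr
        ⟨⟨x, Subgroup.mem_top x⟩, fun h => hx (congrArg Subtype.val h)⟩
    obtain ⟨w, -, hwc, hw1⟩ := exists_mem_center_of_normal (⊤ : Subgroup (G ⧸ N)) htb
    exact ⟨⟨w, hwc⟩, 1, fun h => hw1 (Subtype.ext_iff.mp h)⟩
  · -- main case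
    set Q := G ⧸ N
    set H' : Subgroup Q := H.map (QuotientGroup.mk' N) with hH'def
    haveI hH'n : H'.Normal :=
      Subgroup.Normal.map ‹H.Normal› (QuotientGroup.mk' N) (QuotientGroup.mk'_surjective N)
    haveI : H'.FiniteIndex := by
      constructor
      intro h0
      have hd : H'.index ∣ H.index := Subgroup.index_map_dvd H (QuotientGroup.mk'_surjective N)
      rw [h0, zero_dvd_iff] at hd
      exact Subgroup.FiniteIndex.index_ne_zero (H := H) hd
    haveI : Finite (Q ⧸ H') := Subgroup.finite_quotient_of_finiteIndex
    -- get a nontrivial central element of H ⧸ (N.subgroupOf H)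
    set K : Subgroup H := N.subgroupOf H with hKdef
    have hKne : K ≠ ⊤ := fun h => hHN (Subgroup.subgroupOf_eq_top.mp h)
    haveI hcen : Nontrivial (Subgroup.center (H ⧸ K)) := hhyp K hKne
    obtain ⟨ζ, hζ1⟩ := exists_ne (1 : Subgroup.center (H ⧸ K))
    obtain ⟨u, hu⟩ := QuotientGroup.mk_surjective (ζ : H ⧸ K)
    set z : Q := QuotientGroup.mk (u : G) with hzdef
    have hzH' : z ∈ H' := ⟨(u : G), u.2, rfl⟩
    have hz1 : z ≠ 1 := by
      intro h
      rw [hzdef, QuotientGroup.eq_one_iff] at h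
      apply hζ1
      have hk : u ∈ K := by rwa [hKdef, Subgroup.mem_subgroupOf]
      have : (ζ : H ⧸ K) = 1 := by rw [← hu, QuotientGroup.eq_one_iff]; exact hk
      exact Subtype.ext this
    -- z commutes with everything in H'
    have hzc : ∀ q ∈ H', z * q = q * z := by
      rintro _ ⟨v, hv, rfl⟩
      have hcent : (ζ : H ⧸ K) * QuotientGroup.mk (⟨v, hv⟩ : H)
          = QuotientGroup.mk (⟨v, hv⟩ : H) * (ζ : H ⧸ K) :=
        (Subgroup.mem_center_iff.mp ζ.2 (QuotientGroup.mk (⟨v, hv⟩ : H))).symm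
      rw [← hu, ← QuotientGroup.mk_mul, ← QuotientGroup.mk_mul, QuotientGroup.eq,
        Subgroup.mem_subgroupOf] at hcent
      show (QuotientGroup.mk' N) ((u : G)) * (QuotientGroup.mk' N) v
          = (QuotientGroup.mk' N) v * (QuotientGroup.mk' N) ((u : G))
      rw [← map_mul, ← map_mul, QuotientGroup.mk'_apply, QuotientGroup.mk'_apply,
        QuotientGroup.eq]
      simpa using hcent
    -- the finitely many conjugates of z
    set cset : Set Q := Set.range (fun x : Q ⧸ H' => x.out * z * x.out⁻¹) with hcsetdef
    have hkey : ∀ q : Q, q * z * q⁻¹ ∈ cset := by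
      intro q
      refine ⟨QuotientGroup.mk q, ?_⟩
      set t := (QuotientGroup.mk q : Q ⧸ H').out with ht
      have hh : t⁻¹ * q ∈ H' := by
        rw [← QuotientGroup.eq]
        exact QuotientGroup.out_eq' _
      have hcomm := hzc _ hh
      calc t * z * t⁻¹ = t * (z * (t⁻¹ * q)) * (t⁻¹ * q)⁻¹ * t⁻¹ := by group
        _ = t * ((t⁻¹ * q) * z) * (t⁻¹ * q)⁻¹ * t⁻¹ := by rw [hcomm]
        _ = q * z * q⁻¹ := by group
    have hz_cset : z ∈ cset := by simpa using hkey 1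
    -- elements of cset commute with H'
    have hcsub : ∀ c ∈ cset, ∀ h ∈ H', h * c = c * h := by
      rintro _ ⟨x, rfl⟩ h hh
      set t := x.out with ht
      have h' : t⁻¹ * h * t ∈ H' := by
        have := hH'n.conj_mem h hh t⁻¹
        convert this using 2; group
      have hcomm := hzc _ h'
      calc h * (t * z * t⁻¹) = t * ((t⁻¹ * h * t) * z) * t⁻¹ := by group
        _ = t * (z * (t⁻¹ * h * t)) * t⁻¹ := by rw [← hcomm]
        _ = (t * z * t⁻¹) * h := by group
    set A : Subgroup Q := Subgroup.closure cset with hAdef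
    haveI hAnormal : A.Normal := by
      constructor
      intro n hn g
      rw [hAdef] at hn ⊢
      induction hn using Subgroup.closure_induction with
      | mem x hx =>
        obtain ⟨y, rfl⟩ := hx
        have h2 : g * (y.out * z * y.out⁻¹) * g⁻¹ = (g * y.out) * z * (g * y.out)⁻¹ := by group
        rw [h2]
        exact Subgroup.subset_closure (hkey _)
      | one => simpa using Subgroup.one_mem _
      | mul x y hx hy ihx ihy =>
        have h2 : g * (x * y) * g⁻¹ = (g * x * g⁻¹) * (g * y * g⁻¹) := by group
        rw [h2]
        exact Subgroup.mul_mem _ ihx ihy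
      | inv x hx ih =>
        have h2 : g * x⁻¹ * g⁻¹ = (g * x * g⁻¹)⁻¹ := by group
        rw [h2]
        exact Subgroup.inv_mem _ ih
    have hAcent : A ≤ Subgroup.centralizer (H' : Set Q) := by
      rw [hAdef, Subgroup.closure_le]
      intro c hc
      rw [SetLike.mem_coe, Subgroup.mem_centralizer_iff]
      exact fun h hh => hcsub c hc h hh
    -- the finitely generated subgroup F
    set Tset : Set Q := Set.range (fun x : Q ⧸ H' => x.out) with hTsetdef
    set F : Subgroup Q := Subgroup.closure (cset ∪ Tset) with hFdef
    haveI hfinU : Finite ↥(cset ∪ Tset) :=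
      ((Set.finite_range _).union (Set.finite_range _)).to_subtype
    haveI hFnil : Group.IsNilpotent F := hQnil F inferInstance
    set B : Subgroup F := A.subgroupOf F with hBdef
    haveI : B.Normal := hAnormal.subgroupOf F
    have hzF : z ∈ F := Subgroup.subset_closure (Or.inl hz_cset)
    have hBne : B ≠ ⊥ := by
      rw [Subgroup.ne_bot_iff_exists_ne_one]
      refine ⟨⟨⟨z, hzF⟩, ?_⟩, ?_⟩
      · rw [hBdef, Subgroup.mem_subgroupOf]
        exact Subgroup.subset_closure hz_cset
      · intro h
        exact hz1 (congrArg Subtype.val (congrArg Subtype.val h))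
    obtain ⟨w, hwB, hwc, hw1⟩ := exists_mem_center_of_normal B hBne
    set w₀ : Q := (w : Q) with hw₀def
    have hw₀A : w₀ ∈ A := by
      rw [hBdef, Subgroup.mem_subgroupOf] at hwB
      exact hwB
    have hw₀1 : w₀ ≠ 1 := fun h => hw1 (Subtype.ext h)
    have hw₀Z : w₀ ∈ Subgroup.center Q := by
      rw [Subgroup.mem_center_iff]
      intro q
      set t := (QuotientGroup.mk q : Q ⧸ H').out with ht
      have hhH' : t⁻¹ * q ∈ H' := by
        rw [← QuotientGroup.eq]
        exact QuotientGroup.out_eq' _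
      have h1 : w₀ * (t⁻¹ * q) = (t⁻¹ * q) * w₀ :=
        (Subgroup.mem_centralizer_iff.mp (hAcent hw₀A) _ hhH').symm
      have htF : t ∈ F := Subgroup.subset_closure (Or.inr ⟨_, rfl⟩)
      have h2 : t * w₀ = w₀ * t :=
        congrArg Subtype.val (Subgroup.mem_center_iff.mp hwc ⟨t, htF⟩)
      calc q * w₀ = t * ((t⁻¹ * q) * w₀) := by group
        _ = t * (w₀ * (t⁻¹ * q)) := by rw [← h1]
        _ = (t * w₀) * (t⁻¹ * q) := by group
        _ = w₀ * t * (t⁻¹ * q) := by rw [h2]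
        _ = w₀ * q := by group
    exact ⟨⟨w₀, hw₀Z⟩, 1, fun h => hw₀1 (Subtype.ext_iff.mp h)⟩
end

section
/- Let $G$ be a group, $Z$ a normal subgroup of $G$, and $F$ a subgroup of $G$ with $Z \sqcup F = G$ (so $G = ZF$, since $Z$ is normal). If the center of the quotient group $G/Z$ is trivial, then for every natural number $n$ the image in $G$ of the $n$-th term `upperCentralSeries F n` of the upper central series of $F$ is contained in $Z$. -/
open scoped Pointwise


/-- If `Z ⊔ F = G` with `Z` normal and the center of `G ⧸ Z` is trivial, then
the image in `G` of every term of the upper central series of `F` lies in `Z`. -/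
theorem map_upperCentralSeries_le_of_center_quotient_bot
    (G : Type*) [Group G] (Z : Subgroup G) [Z.Normal] (F : Subgroup G)
    (hZF : Z ⊔ F = ⊤) (hc : Subgroup.center (G ⧸ Z) = ⊥) :
    ∀ n : ℕ, Subgroup.map F.subtype (upperCentralSeries F n) ≤ Z := by
  intro n
  induction n with
  | zero => simp [upperCentralSeries, Subgroup.upperCentralSeries_zero]
  | succ n ih =>
      rintro g ⟨x, hx, rfl⟩
      have hcen : (QuotientGroup.mk (F.subtype x) : G ⧸ Z) ∈ Subgroup.center (G ⧸ Z) := by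
        rw [Subgroup.mem_center_iff]
        intro q
        obtain ⟨g, rfl⟩ := QuotientGroup.mk_surjective q
        have hg : g ∈ (↑(Z ⊔ F) : Set G) := by rw [hZF]; trivial
        rw [Subgroup.normal_mul] at hg
        obtain ⟨z, hz, f, hf, rfl⟩ := hg
        have hff := (mem_upperCentralSeries_succ_iff).mp hx ⟨f, hf⟩
        have hcomm : (x : G) * f * (x : G)⁻¹ * f⁻¹ ∈ Z := ih ⟨_, hff, rfl⟩
        have h1 : (QuotientGroup.mk (z * f) : G ⧸ Z) = QuotientGroup.mk f := by
          have hz1 : (QuotientGroup.mk z : G ⧸ Z) = 1 := (QuotientGroup.eq_one_iff z).mpr hz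
          rw [QuotientGroup.mk_mul, hz1, one_mul]
        rw [h1]
        open scoped commutatorElement in
        have h2 : ⁅(QuotientGroup.mk ((x : G)) : G ⧸ Z), (QuotientGroup.mk f : G ⧸ Z)⁆ = 1 := by
          rw [commutatorElement_def, ← QuotientGroup.mk_inv, ← QuotientGroup.mk_inv,
            ← QuotientGroup.mk_mul, ← QuotientGroup.mk_mul, ← QuotientGroup.mk_mul]
          exact QuotientGroup.eq_one_iff _ |>.mpr hcomm
        exact (commutatorElement_eq_one_iff_commute.mp h2).eq.symm
      rw [hc, Subgroup.mem_bot] at hcen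
      exact (QuotientGroup.eq_one_iff _).mp hcen
end
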